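/- arXiv:1401.4255 — 5 statements merged into one kernel-verified Lean document; each statement's English description precedes it below -/
import Mathlib

section
/- For all integers n ≥ k ≥ 1, the Bell polynomial of the second kind evaluated at x₁ = 0 and x₂ = ⋯ = x_{n-k+1} = 1 satisfies B_{n,k}(0,1,1,…,1) = ∑_{i=0}^{k} (-1)^i · C(n,i) · S(n-i, k-i), where S denotes the Stirling numbers of the second kind. -/
open Finset

/-- Bell polynomials of the second kind: `bellB n k x` is
`B_{n,k}(x 1, x 2, …, x (n-k+1))`, summing over sequences of nonnegative
integers `ℓ 1, …` with `∑ i * ℓ i = n` and `∑ ℓ i = k`. -/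
noncomputable def bellB (n k : ℕ) (x : ℕ → ℝ) : ℝ :=
  ∑ ℓ : Fin (n + 1) → Fin (n + 1),
    if (ℓ 0 : ℕ) = 0 ∧ (∑ i : Fin (n + 1), (i : ℕ) * (ℓ i : ℕ)) = n ∧ (∑ i : Fin (n + 1), (ℓ i : ℕ)) = k then
      (n.factorial : ℝ) / (∏ i : Fin (n + 1), ((ℓ i : ℕ).factorial : ℝ)) *
        ∏ i : Fin (n + 1), (x (i : ℕ) / ((i : ℕ).factorial : ℝ)) ^ (ℓ i : ℕ)
    else 0

/-- Stirling numbers of the second kind (real-valued), with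
`stirlingS 0 0 = 1` and `stirlingS n 0 = 0` for `n ≥ 1`. -/
noncomputable def stirlingS (n k : ℕ) : ℝ :=
  (1 / (k.factorial : ℝ)) *
    ∑ l ∈ Finset.range (k + 1), (-1 : ℝ) ^ (k - l) * (k.choose l) * (l : ℝ) ^ n

open PowerSeries


lemma coeff_exp_pow (l m : ℕ) :
    PowerSeries.coeff m ((PowerSeries.exp ℝ) ^ l) = (l : ℝ) ^ m / (m.factorial : ℝ) := by
  rw [PowerSeries.exp_pow_eq_rescale_exp, PowerSeries.coeff_rescale, PowerSeries.coeff_exp]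
  push_cast
  ring

lemma tail_coeff (n m : ℕ) (hm : m ≤ n) :
    (PowerSeries.coeff m)
      (PowerSeries.exp ℝ - ∑ i ∈ Finset.range (n+1), PowerSeries.C (1 / (i.factorial : ℝ)) * (PowerSeries.X : PowerSeries ℝ) ^ i) = 0 := by
  rw [map_sub, map_sum]
  have hmem : m ∈ Finset.range (n+1) := by simp; omega
  simp only [PowerSeries.coeff_C_mul, PowerSeries.coeff_X_pow, mul_ite, mul_one, mul_zero,
    PowerSeries.coeff_exp]
  rw [Finset.sum_ite_eq, if_pos hmem]
  simp

lemma coeff_mul_right_tail (n m : ℕ) (hm : m ≤ n) (v t : PowerSeries ℝ)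
    (ht : ∀ j ≤ n, PowerSeries.coeff j t = 0) :
    PowerSeries.coeff m (v * t) = 0 := by
  rw [PowerSeries.coeff_mul]
  refine Finset.sum_eq_zero fun p hp => ?_
  rw [Finset.HasAntidiagonal.mem_antidiagonal] at hp
  rw [ht p.2 (by omega), mul_zero]

lemma coeff_mul_tail (n m k : ℕ) (hm : m ≤ n) (u t : PowerSeries ℝ)
    (ht : ∀ j ≤ n, PowerSeries.coeff j t = 0) (hk : 1 ≤ k) :
    PowerSeries.coeff m (u * t ^ k) = 0 := by
  obtain ⟨k', rfl⟩ := Nat.exists_eq_succ_of_ne_zero (Nat.one_le_iff_ne_zero.mp hk)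
  rw [pow_succ, ← mul_assoc]
  exact coeff_mul_right_tail n m hm _ t ht

lemma special_sum (n : ℕ) (hn : 1 ≤ n) :
    (∑ i ∈ (Finset.range (n+1)).erase 0,
        PowerSeries.C ((if i = 1 then (0:ℝ) else 1) / (i.factorial : ℝ)) * (PowerSeries.X : PowerSeries ℝ) ^ i)
      = (PowerSeries.exp ℝ - 1 - PowerSeries.X) -
        (PowerSeries.exp ℝ - ∑ i ∈ Finset.range (n+1), PowerSeries.C (1 / (i.factorial : ℝ)) * (PowerSeries.X : PowerSeries ℝ) ^ i) := by
  have h0 : (0 : ℕ) ∈ Finset.range (n+1) := by simp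
  have h1 : (1 : ℕ) ∈ (Finset.range (n+1)).erase 0 := by simp; omega
  rw [← Finset.add_sum_erase _ _ h0]
  rw [← Finset.add_sum_erase _ _ h1, ← Finset.add_sum_erase _ (fun i => PowerSeries.C (1 / (i.factorial : ℝ)) * (PowerSeries.X : PowerSeries ℝ) ^ i) h1]
  have : ∀ i ∈ ((Finset.range (n+1)).erase 0).erase 1,
      PowerSeries.C ((if i = 1 then (0:ℝ) else 1) / (i.factorial : ℝ)) * (PowerSeries.X : PowerSeries ℝ) ^ i
      = PowerSeries.C (1 / (i.factorial : ℝ)) * (PowerSeries.X : PowerSeries ℝ) ^ i := by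
    intro i hi
    simp only [Finset.mem_erase] at hi
    rw [if_neg hi.1]
  rw [Finset.sum_congr rfl this]
  simp [Nat.factorial]
  ring

lemma coeff_exp_sub_one_pow (j m : ℕ) :
    PowerSeries.coeff m ((PowerSeries.exp ℝ - 1) ^ j)
      = (j.factorial : ℝ) / (m.factorial : ℝ) * stirlingS m j := by
  rw [sub_eq_add_neg, add_pow, map_sum]
  rw [stirlingS]
  rw [Finset.mul_sum, Finset.mul_sum]
  refine Finset.sum_congr rfl fun l hl => ?_
  have : (PowerSeries.exp ℝ) ^ l * (-1 : PowerSeries ℝ) ^ (j - l) * (j.choose l : ℕ)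
      = ((-1 : ℝ) ^ (j - l) * (j.choose l : ℝ)) • ((PowerSeries.exp ℝ) ^ l) := by
    rw [smul_eq_C_mul, map_mul, map_pow, map_neg, map_one, map_natCast]
    ring
  rw [this, map_smul, smul_eq_mul, coeff_exp_pow]
  have hm : (m.factorial : ℝ) ≠ 0 := Nat.cast_ne_zero.mpr m.factorial_ne_zero
  field_simp

lemma trans_prod {M : Type*} [CommMonoid M] (n : ℕ) (ℓ : Fin (n+1) → Fin (n+1))
    (hℓ0 : (ℓ 0 : ℕ) = 0) (F : ℕ → ℕ → M) (hF : F 0 0 = 1) :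
    ∏ i ∈ (Finset.range (n+1)).erase 0,
        F i (if h : i < n+1 then (ℓ ⟨i, h⟩ : ℕ) else 0)
      = ∏ i : Fin (n+1), F i (ℓ i) := by
  rw [Finset.prod_erase _ (a := 0)
    (by rw [dif_pos (Nat.succ_pos n)]; show F 0 ((ℓ ⟨0, _⟩ : Fin (n+1)) : ℕ) = 1;
        rw [show (⟨0, Nat.succ_pos n⟩ : Fin (n+1)) = 0 from rfl, hℓ0, hF])]
  rw [← Fin.prod_univ_eq_prod_range (fun i => F i (if h : i < n+1 then (ℓ ⟨i, h⟩ : ℕ) else 0)) (n+1)]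
  refine Finset.prod_congr rfl fun i _ => ?_
  rw [dif_pos i.isLt, Fin.eta]

lemma trans_sum {M : Type*} [AddCommMonoid M] (n : ℕ) (ℓ : Fin (n+1) → Fin (n+1))
    (hℓ0 : (ℓ 0 : ℕ) = 0) (F : ℕ → ℕ → M) (hF : F 0 0 = 0) :
    ∑ i ∈ (Finset.range (n+1)).erase 0,
        F i (if h : i < n+1 then (ℓ ⟨i, h⟩ : ℕ) else 0)
      = ∑ i : Fin (n+1), F i (ℓ i) :=
  trans_prod (M := Multiplicative M) n ℓ hℓ0 F hF

lemma bellB_eq_coeff (n k : ℕ) (hk : 1 ≤ k) (hkn : k ≤ n) (x : ℕ → ℝ) :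
    bellB n k x = (n.factorial : ℝ) / (k.factorial : ℝ) *
      (PowerSeries.coeff n)
        ((∑ i ∈ (Finset.range (n+1)).erase 0,
            PowerSeries.C (x i / (i.factorial : ℝ)) * (PowerSeries.X : PowerSeries ℝ) ^ i) ^ k) := by
  classical
  set s : Finset ℕ := (Finset.range (n+1)).erase 0 with hs
  rw [Finset.sum_pow_eq_sum_piAntidiag s _ k, map_sum, Finset.mul_sum]
  -- compute each coefficient
  have hcoeff : ∀ ℓ ∈ piAntidiag s k,
      (n.factorial : ℝ) / (k.factorial : ℝ) * (PowerSeries.coeff n)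
        ((Nat.multinomial s ℓ : PowerSeries ℝ) *
          ∏ i ∈ s, (PowerSeries.C (x i / (i.factorial : ℝ)) * (PowerSeries.X : PowerSeries ℝ) ^ i) ^ ℓ i)
      = if ∑ i ∈ s, i * ℓ i = n then
          (n.factorial : ℝ) / (k.factorial : ℝ) * (Nat.multinomial s ℓ : ℝ) *
            ∏ i ∈ s, (x i / (i.factorial : ℝ)) ^ ℓ i
        else 0 := by
    intro ℓ _
    have hprod : ∏ i ∈ s, (PowerSeries.C (x i / (i.factorial : ℝ)) * (PowerSeries.X : PowerSeries ℝ) ^ i) ^ ℓ i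
        = PowerSeries.C (∏ i ∈ s, (x i / (i.factorial : ℝ)) ^ ℓ i) *
            (PowerSeries.X : PowerSeries ℝ) ^ (∑ i ∈ s, i * ℓ i) := by
      simp_rw [mul_pow, ← map_pow, ← pow_mul]
      rw [Finset.prod_mul_distrib, ← map_prod, Finset.prod_pow_eq_pow_sum]
    rw [hprod]
    have hnat : (Nat.multinomial s ℓ : PowerSeries ℝ) *
        (PowerSeries.C (∏ i ∈ s, (x i / (i.factorial : ℝ)) ^ ℓ i) * (PowerSeries.X : PowerSeries ℝ) ^ (∑ i ∈ s, i * ℓ i))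
        = PowerSeries.C ((Nat.multinomial s ℓ : ℝ) * ∏ i ∈ s, (x i / (i.factorial : ℝ)) ^ ℓ i) *
            (PowerSeries.X : PowerSeries ℝ) ^ (∑ i ∈ s, i * ℓ i) := by
      rw [map_mul, map_natCast]; ring
    rw [hnat, PowerSeries.coeff_C_mul_X_pow]
    by_cases h : ∑ i ∈ s, i * ℓ i = n
    · rw [if_pos h.symm, if_pos h]; ring
    · rw [if_neg (fun hh => h hh.symm), if_neg h, mul_zero]
  rw [Finset.sum_congr rfl hcoeff]
  rw [← Finset.sum_filter]
  -- now turn `bellB` into a sum over a filtered finset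
  rw [bellB, ← Finset.sum_filter]
  refine Finset.sum_nbij' (fun ℓ i => if h : i < n+1 then (ℓ ⟨i, h⟩ : ℕ) else 0)
    (fun g i => (⟨min (g i.1) n, by omega⟩ : Fin (n+1))) ?_ ?_ ?_ ?_ ?_
  · -- maps into the filtered piAntidiag
    intro ℓ hℓ
    simp only [Finset.mem_filter, Finset.mem_univ, true_and] at hℓ
    obtain ⟨h0, hw, hsum⟩ := hℓ
    simp only [Finset.mem_filter, Finset.mem_piAntidiag]
    refine ⟨⟨?_, ?_⟩, ?_⟩
    · rw [trans_sum n ℓ h0 (fun _ m => m) rfl, hsum]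
    · intro i hi
      by_cases hlt : i < n + 1
      · rw [dif_pos hlt] at hi
        have : i ≠ 0 := by
          rintro rfl
          exact hi (by rw [show (⟨0, hlt⟩ : Fin (n+1)) = 0 from rfl, h0])
        simp [hs, this, hlt]
      · rw [dif_neg hlt] at hi; exact absurd rfl hi
    · rw [trans_sum n ℓ h0 (fun i m => i * m) (by simp), hw]
  · -- maps back
    intro g hg
    simp only [Finset.mem_filter, Finset.mem_piAntidiag] at hg
    obtain ⟨⟨hsum, hsupp⟩, hw⟩ := hg
    have hle : ∀ i, g i ≤ n := by
      intro i
      by_cases hi : i ∈ s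
      · calc g i ≤ ∑ j ∈ s, g j := Finset.single_le_sum (fun _ _ => Nat.zero_le _) hi
          _ = k := hsum
          _ ≤ n := hkn
      · have : g i = 0 := by_contra fun hne => hi (hsupp i hne)
        omega
    have hg0 : g 0 = 0 := by
      have : 0 ∉ s := by simp [hs]
      exact by_contra fun hne => this (hsupp 0 hne)
    have hmin : ∀ i : Fin (n+1), min (g i.1) n = g i.1 := fun i => min_eq_left (hle i.1)
    simp only [Finset.mem_filter, Finset.mem_univ, true_and]
    refine ⟨?_, ?_, ?_⟩
    · show min (g 0) n = 0; simp [hg0]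
    · -- weighted sum
      have : ∑ i : Fin (n+1), (i : ℕ) * min (g i.1) n = ∑ i ∈ Finset.range (n+1), i * g i := by
        rw [Fin.sum_univ_eq_sum_range (fun i => i * min (g i) n)]
        exact Finset.sum_congr rfl fun i hi => by
          rw [min_eq_left (hle i)]
      rw [this, ← Finset.add_sum_erase _ _ (Finset.mem_range.mpr (Nat.succ_pos n))]
      simpa [hs] using hw
    · have : ∑ i : Fin (n+1), min (g i.1) n = ∑ i ∈ Finset.range (n+1), g i := by
        rw [Fin.sum_univ_eq_sum_range (fun i => min (g i) n)]
        exact Finset.sum_congr rfl fun i hi => min_eq_left (hle i)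
      rw [this, ← Finset.add_sum_erase _ _ (Finset.mem_range.mpr (Nat.succ_pos n))]
      simpa [hs, hg0] using hsum
  · -- left inverse
    intro ℓ hℓ
    funext i
    ext
    show min (if h : (i:ℕ) < n+1 then (ℓ ⟨i, h⟩ : ℕ) else 0) n = (ℓ i : ℕ)
    rw [dif_pos i.isLt, Fin.eta]
    exact min_eq_left (Nat.lt_succ_iff.mp (ℓ i).isLt)
  · -- right inverse
    intro g hg
    simp only [Finset.mem_filter, Finset.mem_piAntidiag] at hg
    obtain ⟨⟨hsum, hsupp⟩, hw⟩ := hg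
    have hle : ∀ i ∈ s, g i ≤ n := by
      intro i hi
      calc g i ≤ ∑ j ∈ s, g j := Finset.single_le_sum (fun _ _ => Nat.zero_le _) hi
        _ = k := hsum
        _ ≤ n := hkn
    funext i
    by_cases hlt : i < n + 1
    · show (if h : i < n+1 then ((⟨min (g i) n, _⟩ : Fin (n+1)) : ℕ) else 0) = g i
      rw [dif_pos hlt]
      show min (g i) n = g i
      by_cases hi : i ∈ s
      · exact min_eq_left (hle i hi)
      · have : g i = 0 := by_contra fun hne => hi (hsupp i hne)
        simp [this]
    · show (if h : i < n+1 then ((⟨min (g i) n, _⟩ : Fin (n+1)) : ℕ) else 0) = g i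
      rw [dif_neg hlt]
      have : i ∉ s := by simp [hs]; omega
      have : g i = 0 := by_contra fun hne => this (hsupp i hne)
      omega
  · -- value equality
    intro ℓ hℓ
    simp only [Finset.mem_filter, Finset.mem_univ, true_and] at hℓ
    obtain ⟨h0, hw, hsum⟩ := hℓ
    have hfact : ∏ i ∈ s, (((if h : i < n+1 then (ℓ ⟨i, h⟩ : ℕ) else 0).factorial : ℝ))
        = ∏ i : Fin (n+1), ((ℓ i : ℕ).factorial : ℝ) :=
      trans_prod n ℓ h0 (fun _ m => (m.factorial : ℝ)) (by simp)
    have hpow : ∏ i ∈ s, (x i / (i.factorial : ℝ)) ^ (if h : i < n+1 then (ℓ ⟨i, h⟩ : ℕ) else 0)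
        = ∏ i : Fin (n+1), (x (i : ℕ) / ((i : ℕ).factorial : ℝ)) ^ (ℓ i : ℕ) :=
      trans_prod n ℓ h0 (fun i m => (x i / (i.factorial : ℝ)) ^ m) (by simp)
    have hsum' : ∑ i ∈ s, (if h : i < n+1 then (ℓ ⟨i, h⟩ : ℕ) else 0) = k := by
      rw [trans_sum n ℓ h0 (fun _ m => m) rfl, hsum]
    have hspec := Nat.multinomial_spec s (fun i => if h : i < n+1 then (ℓ ⟨i, h⟩ : ℕ) else 0)
    rw [hsum'] at hspec
    -- cast to ℝ
    have hspecR : (∏ i ∈ s, (((if h : i < n+1 then (ℓ ⟨i, h⟩ : ℕ) else 0).factorial : ℝ))) *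
        (Nat.multinomial s (fun i => if h : i < n+1 then (ℓ ⟨i, h⟩ : ℕ) else 0) : ℝ) = (k.factorial : ℝ) := by
      exact_mod_cast congrArg (Nat.cast : ℕ → ℝ) hspec
    rw [hfact] at hspecR
    have hP : (∏ i : Fin (n+1), ((ℓ i : ℕ).factorial : ℝ)) ≠ 0 :=
      Finset.prod_ne_zero_iff.mpr fun i _ => Nat.cast_ne_zero.mpr (Nat.factorial_ne_zero _)
    have hkf : (k.factorial : ℝ) ≠ 0 := Nat.cast_ne_zero.mpr k.factorial_ne_zero
    rw [hpow]
    rw [show (Nat.multinomial s (fun i => if h : i < n+1 then (ℓ ⟨i, h⟩ : ℕ) else 0) : ℝ)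
        = (k.factorial : ℝ) / (∏ i : Fin (n+1), ((ℓ i : ℕ).factorial : ℝ)) by
      field_simp; linarith [hspecR]]
    field_simp

theorem stmt_0 (n k : ℕ) (hk : 1 ≤ k) (hkn : k ≤ n) :
    bellB n k (fun i => if i = 1 then 0 else 1) =
      ∑ i ∈ Finset.range (k + 1),
        (-1 : ℝ) ^ i * (n.choose i) * stirlingS (n - i) (k - i) := by
  have hn : 1 ≤ n := le_trans hk hkn
  rw [bellB_eq_coeff n k hk hkn, special_sum n hn]
  set A : PowerSeries ℝ := PowerSeries.exp ℝ - 1 - PowerSeries.X with hA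
  set T : PowerSeries ℝ :=
    PowerSeries.exp ℝ - ∑ i ∈ Finset.range (n+1), PowerSeries.C (1 / (i.factorial : ℝ)) * (PowerSeries.X : PowerSeries ℝ) ^ i with hT
  -- kill the tail
  have step1 : (PowerSeries.coeff n) ((A - T) ^ k) = (PowerSeries.coeff n) (A ^ k) := by
    rw [sub_eq_add_neg, add_pow, map_sum]
    rw [Finset.sum_eq_single k]
    · simp
    · intro j hj hjk
      have h1j : 1 ≤ k - j := by simp at hj; omega
      have : A ^ j * (-T) ^ (k - j) * ((k.choose j : ℕ) : PowerSeries ℝ)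
          = (A ^ j * ((k.choose j : ℕ) : PowerSeries ℝ)) * (-T) ^ (k - j) := by ring
      rw [this]
      exact coeff_mul_tail n n (k - j) (le_refl n) _ (-T)
        (fun i hi => by rw [map_neg, tail_coeff n i hi, neg_zero]) h1j
    · intro h; simp at h
  rw [step1]
  -- expand (B - X)^k with B = exp - 1
  have hAX : A = (PowerSeries.exp ℝ - 1) + (- PowerSeries.X) := by rw [hA]; ring
  rw [hAX, add_pow, map_sum, Finset.mul_sum]
  rw [← Finset.sum_range_reflect (fun i => (-1 : ℝ) ^ i * (n.choose i) * stirlingS (n - i) (k - i)) (k+1)]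
  refine Finset.sum_congr rfl fun j hj => ?_
  simp only [Finset.mem_range] at hj
  have hjk : j ≤ k := by omega
  have hkj : k + 1 - 1 - j = k - j := by omega
  rw [hkj]
  have hkjn : k - j ≤ n := by omega
  -- coefficient of the j-th term
  have hterm : (PowerSeries.coeff n)
      ((PowerSeries.exp ℝ - 1) ^ j * (-PowerSeries.X) ^ (k - j) * ((k.choose j : ℕ) : PowerSeries ℝ))
      = (-1 : ℝ) ^ (k - j) * (k.choose j : ℝ) *
        ((j.factorial : ℝ) / ((n - (k - j)).factorial : ℝ) * stirlingS (n - (k - j)) j) := by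
    have hx : (PowerSeries.exp ℝ - 1) ^ j * (-PowerSeries.X) ^ (k - j) * ((k.choose j : ℕ) : PowerSeries ℝ)
        = (((-1 : ℝ) ^ (k - j) * (k.choose j : ℝ)) •
            ((PowerSeries.exp ℝ - 1) ^ j * (PowerSeries.X : PowerSeries ℝ) ^ (k - j))) := by
      rw [smul_eq_C_mul, map_mul, map_pow, map_neg, map_one, map_natCast, neg_pow]
      ring
    rw [hx, map_smul, smul_eq_mul]
    rw [PowerSeries.coeff_mul_X_pow' _ (k - j) n, if_pos hkjn, coeff_exp_sub_one_pow]
  rw [hterm]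
  -- now a scalar identity
  have hnkj : n - (k - j) = n - (k - j) := rfl
  have hsub : k - (k - j) = j := by omega
  have hsub2 : n - (k - j) ≥ 0 := by omega
  -- goal: n!/k! * ((-1)^(k-j) * C(k,j) * (j!/(n-(k-j))! * S)) = (-1)^(k-j) * C(n,k-j) * S
  have key : (n.factorial : ℝ) / (k.factorial : ℝ) * ((k.choose j : ℝ) * ((j.factorial : ℝ) / (((n - (k - j)).factorial : ℝ))))
      = (n.choose (k - j) : ℝ) := by
    have h1 : (k.choose j : ℝ) * (j.factorial : ℝ) * ((k - j).factorial : ℝ) = (k.factorial : ℝ) := by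
      exact_mod_cast congrArg (Nat.cast : ℕ → ℝ) (Nat.choose_mul_factorial_mul_factorial hjk)
    have h2 : (n.choose (k - j) : ℝ) * ((k - j).factorial : ℝ) * ((n - (k - j)).factorial : ℝ) = (n.factorial : ℝ) := by
      exact_mod_cast congrArg (Nat.cast : ℕ → ℝ) (Nat.choose_mul_factorial_mul_factorial hkjn)
    have hk0 : (k.factorial : ℝ) ≠ 0 := Nat.cast_ne_zero.mpr k.factorial_ne_zero
    have hnk0 : (((n - (k - j)).factorial : ℝ)) ≠ 0 := Nat.cast_ne_zero.mpr (n - (k-j)).factorial_ne_zero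
    have hkj0 : (((k - j).factorial : ℝ)) ≠ 0 := Nat.cast_ne_zero.mpr (k-j).factorial_ne_zero
    field_simp
    linear_combination ((n.choose (k-j) : ℝ) * (((n-(k-j)).factorial : ℝ))) * h1 - ((k.choose j : ℝ) * (j.factorial : ℝ)) * h2
  calc (n.factorial : ℝ) / (k.factorial : ℝ) *
        ((-1 : ℝ) ^ (k - j) * (k.choose j : ℝ) *
          ((j.factorial : ℝ) / ((n - (k - j)).factorial : ℝ) * stirlingS (n - (k - j)) j))
      = (-1 : ℝ) ^ (k - j) * ((n.factorial : ℝ) / (k.factorial : ℝ) * ((k.choose j : ℝ) * ((j.factorial : ℝ) / (((n - (k - j)).factorial : ℝ))))) * stirlingS (n - (k - j)) j := by ring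
    _ = (-1 : ℝ) ^ (k - j) * (n.choose (k - j) : ℝ) * stirlingS (n - (k - j)) (k - (k - j)) := by rw [key, hsub]
end

section
/- For every positive integer n, the n-th Bernoulli number satisfies Bₙ = ∑_{k=1}^{n} (-1)^k · k! · B_{n,k}(1/2, 1/3, …, 1/(n-k+2)), where B_{n,k} denotes the Bell polynomial of the second kind. -/
open Finset

open PowerSeries

noncomputable def cseq : ℕ → ℝ := fun i => 1 / ((i + 1).factorial : ℝ)

noncomputable def Fser : PowerSeries ℝ := PowerSeries.mk cseq

lemma X_mul_Fser : (X : PowerSeries ℝ) * Fser = exp ℝ - 1 := by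
  ext m
  cases m with
  | zero =>
    simp [Fser, cseq, coeff_exp]
  | succ m =>
    simp [Fser, cseq, coeff_succ_X_mul, coeff_exp, coeff_one]

lemma bser_mul_Fser : bernoulliPowerSeries ℝ * Fser = 1 := by
  have h := bernoulliPowerSeries_mul_exp_sub_one ℝ
  rw [← X_mul_Fser] at h
  have h2 : (X : PowerSeries ℝ) * (bernoulliPowerSeries ℝ * Fser) = X * 1 := by
    rw [mul_one]; rw [show (X : PowerSeries ℝ) * (bernoulliPowerSeries ℝ * Fser)
      = bernoulliPowerSeries ℝ * (X * Fser) by ring]; exact h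
  exact mul_left_cancel₀ X_ne_zero h2


lemma coeff_bser (n : ℕ) :
    (coeff (R := ℝ) n) (bernoulliPowerSeries ℝ) =
      ∑ k ∈ range (n + 1), (-1 : ℝ) ^ k * coeff (R := ℝ) n ((Fser - 1) ^ k) := by
  set r : PowerSeries ℝ := -(Fser - 1) with hr
  have hgeom : (∑ i ∈ range (n + 1), r ^ i) * Fser = 1 - r ^ (n + 1) := by
    have := geom_sum_mul r (n + 1)
    have hF : Fser = -(r - 1) := by rw [hr]; ring
    rw [hF]; linear_combination -this
  have key : bernoulliPowerSeries ℝ - ∑ i ∈ range (n + 1), r ^ i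
      = bernoulliPowerSeries ℝ * r ^ (n + 1) := by
    calc bernoulliPowerSeries ℝ - ∑ i ∈ range (n + 1), r ^ i
        = bernoulliPowerSeries ℝ - (bernoulliPowerSeries ℝ * Fser) * ∑ i ∈ range (n + 1), r ^ i := by
          rw [bser_mul_Fser, one_mul]
      _ = bernoulliPowerSeries ℝ * (1 - (∑ i ∈ range (n + 1), r ^ i) * Fser) := by ring
      _ = bernoulliPowerSeries ℝ * r ^ (n + 1) := by rw [hgeom]; ring
  have hXr : (X : PowerSeries ℝ) ∣ r := by
    rw [X_dvd_iff, hr]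
    simp [Fser, cseq]
  have hcoeff0 : coeff (R := ℝ) n (bernoulliPowerSeries ℝ * r ^ (n + 1)) = 0 := by
    have hdvd : (X : PowerSeries ℝ) ^ (n + 1) ∣ bernoulliPowerSeries ℝ * r ^ (n + 1) :=
      Dvd.dvd.mul_left (pow_dvd_pow_of_dvd hXr (n + 1)) _
    exact (X_pow_dvd_iff.mp hdvd) n (Nat.lt_succ_self n)
  have := congrArg (coeff (R := ℝ) n) key
  rw [map_sub, hcoeff0, sub_eq_zero] at this
  rw [this, map_sum]
  refine Finset.sum_congr rfl fun k _ => ?_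
  rw [hr, neg_pow, show ((-1 : ℝ⟦X⟧) ^ k) = PowerSeries.C (R := ℝ) ((-1)^k) by
    rw [map_pow, map_neg, map_one], coeff_C_mul]

noncomputable def Pser (n : ℕ) : PowerSeries ℝ := ∑ i ∈ Icc 1 n, C (R := ℝ) (cseq i) * X ^ i

lemma coeff_Pser (n m : ℕ) :
    coeff (R := ℝ) m (Pser n) = if m ∈ Icc 1 n then cseq m else 0 := by
  rw [Pser, map_sum]
  simp_rw [coeff_C_mul, coeff_X_pow, mul_ite, mul_one, mul_zero, eq_comm (a := m)]
  rw [Finset.sum_ite_eq' (Icc 1 n) m (fun i => cseq i)]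

lemma coeff_G_pow_eq (n k : ℕ) :
    coeff (R := ℝ) n ((Fser - 1) ^ k) = coeff (R := ℝ) n (Pser n ^ k) := by
  have hdvd : (X : PowerSeries ℝ) ^ (n + 1) ∣ (Fser - 1) - Pser n := by
    rw [X_pow_dvd_iff]
    intro m hm
    rw [map_sub, map_sub, coeff_Pser]
    rcases Nat.eq_zero_or_pos m with h0 | h1
    · subst h0; simp [Fser, cseq]
    · have hm0 : m ≠ 0 := Nat.pos_iff_ne_zero.mp h1
      rw [if_pos (mem_Icc.mpr ⟨h1, Nat.lt_succ_iff.mp hm⟩)]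
      simp [Fser, coeff_one, hm0]
  have h2 : (X : PowerSeries ℝ) ^ (n + 1) ∣ (Fser - 1) ^ k - Pser n ^ k :=
    dvd_trans hdvd (sub_dvd_pow_sub_pow _ _ k)
  have := (X_pow_dvd_iff.mp h2) n (Nat.lt_succ_self n)
  rw [map_sub, sub_eq_zero] at this
  exact this

lemma coeff_Pser_pow (n k : ℕ) :
    coeff (R := ℝ) n (Pser n ^ k) =
      ∑ ℓ ∈ piAntidiag (Icc 1 n) k,
        if (∑ i ∈ Icc 1 n, i * ℓ i) = n then
          (Nat.multinomial (Icc 1 n) ℓ : ℝ) * ∏ i ∈ Icc 1 n, cseq i ^ ℓ i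
        else 0 := by
  rw [Pser, Finset.sum_pow_eq_sum_piAntidiag, map_sum]
  refine Finset.sum_congr rfl fun ℓ hℓ => ?_
  have hprod : ∏ i ∈ Icc 1 n, (C (R := ℝ) (cseq i) * X ^ i) ^ ℓ i
      = C (R := ℝ) (∏ i ∈ Icc 1 n, cseq i ^ ℓ i) * X ^ (∑ i ∈ Icc 1 n, i * ℓ i) := by
    rw [map_prod, ← Finset.prod_pow_eq_pow_sum, ← Finset.prod_mul_distrib]
    refine Finset.prod_congr rfl fun i _ => ?_
    rw [mul_pow, ← pow_mul, map_pow]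
  rw [hprod, show ((Nat.multinomial (Icc 1 n) ℓ : ℝ⟦X⟧)) = C (R := ℝ) (Nat.multinomial (Icc 1 n) ℓ : ℝ)
      by rw [map_natCast], ← mul_assoc, ← map_mul, coeff_C_mul, coeff_X_pow]
  by_cases h : (∑ i ∈ Icc 1 n, i * ℓ i) = n
  · rw [if_pos h, if_pos h.symm, mul_one]
  · rw [if_neg h, if_neg (Ne.symm h), mul_zero]

lemma range_succ_eq_insert (n : ℕ) : range (n + 1) = insert 0 (Icc 1 n) := by
  ext m; simp [Nat.lt_succ_iff, Nat.one_le_iff_ne_zero]; omega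

lemma bellB_eq (n k : ℕ) (hn : 1 ≤ n) (hk1 : 1 ≤ k) (hkn : k ≤ n) :
    (k.factorial : ℝ) * bellB n k (fun i => 1 / ((i : ℝ) + 1)) =
      (n.factorial : ℝ) *
        ∑ ℓ ∈ piAntidiag (Icc 1 n) k,
          if (∑ i ∈ Icc 1 n, i * ℓ i) = n then
            (Nat.multinomial (Icc 1 n) ℓ : ℝ) * ∏ i ∈ Icc 1 n, cseq i ^ ℓ i
          else 0 := by
  classical
  have hfin : ∀ (ℓ : Fin (n+1) → Fin (n+1)) (f : ℕ → ℕ → ℕ),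
      (∑ i : Fin (n+1), f i.val (ℓ i : ℕ)) =
        f 0 ((if h : (0:ℕ) < n + 1 then (ℓ ⟨0, h⟩ : ℕ) else 0))
        + ∑ m ∈ Icc 1 n, f m ((if h : m < n + 1 then (ℓ ⟨m, h⟩ : ℕ) else 0)) := by
    intro ℓ f
    rw [show (∑ i : Fin (n+1), f i.val (ℓ i : ℕ))
        = ∑ m ∈ range (n+1), f m ((if h : m < n + 1 then (ℓ ⟨m, h⟩ : ℕ) else 0)) by
      rw [← Fin.sum_univ_eq_sum_range (fun m => f m ((if h : m < n + 1 then (ℓ ⟨m, h⟩ : ℕ) else 0))) (n+1)]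
      exact Finset.sum_congr rfl fun i _ => by simp [i.isLt]]
    rw [range_succ_eq_insert, Finset.sum_insert (by simp)]
  rw [bellB, ← Finset.sum_filter, ← Finset.sum_filter, Finset.mul_sum, Finset.mul_sum]
  refine Finset.sum_bij'
    (i := fun (ℓ : Fin (n+1) → Fin (n+1)) _ => (fun m => if h : m < n + 1 then (ℓ ⟨m, h⟩ : ℕ) else 0))
    (j := fun (g : ℕ → ℕ) hg => (fun i : Fin (n+1) => (⟨g i.val, ?_⟩ : Fin (n+1))))
    ?_ ?_ ?_ ?_ ?_
  · -- bound : g i.val < n + 1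
    rw [Finset.mem_filter, mem_piAntidiag] at hg
    obtain ⟨⟨hsum, hsupp⟩, _⟩ := hg
    refine Nat.lt_succ_of_le ?_
    by_cases h0 : g i.val = 0
    · omega
    · calc g i.val ≤ ∑ m ∈ Icc 1 n, g m :=
            Finset.single_le_sum (fun m _ => Nat.zero_le _) (hsupp _ h0)
        _ = k := hsum
        _ ≤ n := hkn
  · -- hi : maps into target
    intro ℓ hℓ
    simp only [Finset.mem_filter, Finset.mem_univ, true_and] at hℓ
    obtain ⟨h0, hw, hs⟩ := hℓ
    have hz : (if h : (0:ℕ) < n + 1 then (ℓ ⟨0, h⟩ : ℕ) else 0) = 0 := by simp [h0]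
    have e1 := hfin ℓ (fun m v => v)
    have e2 := hfin ℓ (fun m v => m * v)
    rw [hz, zero_add, hs] at e1
    rw [hz, mul_zero, zero_add, hw] at e2
    rw [Finset.mem_filter, mem_piAntidiag]
    refine ⟨⟨e1.symm, ?_⟩, e2.symm⟩
    intro m hm
    by_cases h : m < n + 1
    · rcases Nat.eq_zero_or_pos m with rfl | h1
      · simp only [dif_pos h] at hm
        exact absurd (show ((ℓ ⟨0, h⟩ : Fin (n+1)) : ℕ) = 0 from h0) hm
      · exact mem_Icc.mpr ⟨h1, Nat.lt_succ_iff.mp h⟩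
    · simp [dif_neg h] at hm
      obtain ⟨hx, _⟩ := hm
      omega
  · -- hj : maps back
    intro g hg
    rw [Finset.mem_filter, mem_piAntidiag] at hg
    obtain ⟨⟨hsum, hsupp⟩, hw⟩ := hg
    simp only [Finset.mem_filter, Finset.mem_univ, true_and]
    have hg0 : g 0 = 0 := by
      by_contra h; exact absurd (hsupp 0 h) (by simp)
    refine ⟨hg0, ?_, ?_⟩
    · rw [show (∑ i : Fin (n+1), (i : ℕ) * g i.val) = ∑ m ∈ range (n+1), m * g m from
        Fin.sum_univ_eq_sum_range (fun m => m * g m) (n+1)]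
      rw [range_succ_eq_insert, Finset.sum_insert (by simp), zero_mul, zero_add, hw]
    · rw [show (∑ i : Fin (n+1), g i.val) = ∑ m ∈ range (n+1), g m from
        Fin.sum_univ_eq_sum_range (fun m => g m) (n+1)]
      rw [range_succ_eq_insert, Finset.sum_insert (by simp), hg0, zero_add, hsum]
  · -- left_inv
    intro ℓ hℓ
    funext i
    apply Fin.ext
    simp [i.isLt]
  · -- right_inv
    intro g hg
    rw [Finset.mem_filter, mem_piAntidiag] at hg
    obtain ⟨⟨hsum, hsupp⟩, hw⟩ := hg
    funext m
    by_cases h : m < n + 1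
    · simp [h]
    · simp only [dif_neg h]
      by_contra hne
      have := hsupp m fun hz => hne hz.symm
      rw [mem_Icc] at this
      omega
  · -- value equality
    intro ℓ hℓ
    simp only [Finset.mem_filter, Finset.mem_univ, true_and] at hℓ
    obtain ⟨h0, hw, hs⟩ := hℓ
    beta_reduce
    set g : ℕ → ℕ := fun m => if h : m < n + 1 then (ℓ ⟨m, h⟩ : ℕ) else 0 with hgdef
    have hg0 : g 0 = 0 := by simp [hgdef, h0]
    have hz : (if h : (0:ℕ) < n + 1 then (ℓ ⟨0, h⟩ : ℕ) else 0) = 0 := by simp [h0]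
    have e0 := hfin ℓ (fun m v => v)
    rw [hz, zero_add, hs] at e0
    have e1 : (∑ m ∈ Icc 1 n, g m) = k := e0.symm
    -- products
    have hprodfact : (∏ i : Fin (n+1), ((ℓ i : ℕ).factorial : ℝ))
        = ∏ m ∈ Icc 1 n, ((g m).factorial : ℝ) := by
      rw [show (∏ i : Fin (n+1), ((ℓ i : ℕ).factorial : ℝ))
          = ∏ m ∈ range (n+1), ((g m).factorial : ℝ) by
        rw [← Fin.prod_univ_eq_prod_range (fun m => ((g m).factorial : ℝ)) (n+1)]
        exact Finset.prod_congr rfl fun i _ => by simp [hgdef, i.isLt, Nat.le_of_lt_succ i.isLt, not_lt.mpr (Nat.le_of_lt_succ i.isLt)]]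
      rw [range_succ_eq_insert, Finset.prod_insert (by simp), hg0]
      norm_num
    have hprodx : (∏ i : Fin (n+1), ((1 : ℝ) / ((i : ℕ) + 1) / ((i : ℕ).factorial : ℝ)) ^ (ℓ i : ℕ))
        = ∏ m ∈ Icc 1 n, cseq m ^ g m := by
      rw [show (∏ i : Fin (n+1), ((1 : ℝ) / ((i : ℕ) + 1) / ((i : ℕ).factorial : ℝ)) ^ (ℓ i : ℕ))
          = ∏ m ∈ range (n+1), ((1 : ℝ) / ((m : ℝ) + 1) / ((m).factorial : ℝ)) ^ g m by
        rw [← Fin.prod_univ_eq_prod_range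
          (fun m => ((1 : ℝ) / ((m : ℝ) + 1) / ((m).factorial : ℝ)) ^ g m) (n+1)]
        exact Finset.prod_congr rfl fun i _ => by simp [hgdef, i.isLt, Nat.le_of_lt_succ i.isLt, not_lt.mpr (Nat.le_of_lt_succ i.isLt)]]
      rw [range_succ_eq_insert, Finset.prod_insert (by simp), hg0, pow_zero, one_mul]
      refine Finset.prod_congr rfl fun m hm => ?_
      congr 1
      rw [cseq, Nat.factorial_succ]
      push_cast
      field_simp
    -- multinomial cast
    have hmult : (Nat.multinomial (Icc 1 n) g : ℝ)
        = (k.factorial : ℝ) / ∏ m ∈ Icc 1 n, ((g m).factorial : ℝ) := by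
      have hspec := Nat.multinomial_spec (Icc 1 n) g
      rw [show (∑ i ∈ Icc 1 n, g i) = k from e1] at hspec
      have hpos : (0:ℝ) < ∏ m ∈ Icc 1 n, ((g m).factorial : ℝ) := by
        apply Finset.prod_pos; intro m _; exact_mod_cast Nat.factorial_pos _
      rw [eq_div_iff (ne_of_gt hpos)]
      rw [← Nat.cast_prod]
      rw [mul_comm]
      exact_mod_cast congrArg (Nat.cast : ℕ → ℝ) hspec
    rw [hprodfact, hprodx, hmult]
    ring


theorem stmt_3 (n : ℕ) (hn : 1 ≤ n) :
    (bernoulli n : ℝ) =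
      ∑ k ∈ Finset.Icc 1 n,
        (-1 : ℝ) ^ k * (k.factorial : ℝ) * bellB n k (fun i => 1 / ((i : ℝ) + 1)) := by
  have hb : (bernoulli n : ℝ) =
      (n.factorial : ℝ) * (PowerSeries.coeff (R := ℝ) n) (bernoulliPowerSeries ℝ) := by
    rw [bernoulliPowerSeries, PowerSeries.coeff_mk]
    rw [show (algebraMap ℚ ℝ) (bernoulli n / n.factorial) = ((bernoulli n / n.factorial : ℚ) : ℝ)
      from rfl]
    push_cast
    rw [mul_div_cancel₀]
    exact_mod_cast Nat.factorial_ne_zero n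
  rw [hb, coeff_bser, range_succ_eq_insert, Finset.sum_insert (by simp)]
  have h0 : (PowerSeries.coeff (R := ℝ) n) ((Fser - 1) ^ 0) = 0 := by
    rw [pow_zero, PowerSeries.coeff_one, if_neg (by omega)]
  rw [h0, mul_zero, zero_add, Finset.mul_sum]
  refine Finset.sum_congr rfl fun k hk => ?_
  rw [Finset.mem_Icc] at hk
  have hB := bellB_eq n k hn hk.1 hk.2
  rw [coeff_G_pow_eq, coeff_Pser_pow]
  linear_combination (-(-1:ℝ)^k) * hB
end

section
/- For all integers n ≥ k ≥ 1 and any sequence x₂, x₃, …, x_{n+1}, the Bell polynomials of the second kind satisfy B_{n,k}(x₂/2, x₃/3, …, x_{n-k+2}/(n-k+2)) = (n!/(n+k)!) · B_{n+k,k}(0, x₂, x₃, …, x_{n+1}). -/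
open Finset

lemma shift_sum {M : Type*} [AddCommMonoid M] (n m : ℕ) (hm : 1 ≤ m) (g : ℕ → M)
    (h0 : g 0 = 0) (ht : ∀ j, n + 2 ≤ j → g j = 0) :
    ∑ j ∈ Finset.range (n + m + 1), g j = ∑ i ∈ Finset.range (n + 1), g (i + 1) := by
  have h1 : ∑ j ∈ Finset.range (n + m + 1), g j = ∑ j ∈ Finset.range (n + 2), g j := by
    refine (Finset.sum_subset (Finset.range_subset_range.2 (by omega)) ?_).symm
    intro x hx hx2
    exact ht x (by simp only [Finset.mem_range] at hx2 ⊢; omega)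
  rw [h1, Finset.sum_range_succ' g (n+1), h0, add_zero]

lemma shift_prod {M : Type*} [CommMonoid M] (n m : ℕ) (hm : 1 ≤ m) (g : ℕ → M)
    (h0 : g 0 = 1) (ht : ∀ j, n + 2 ≤ j → g j = 1) :
    ∏ j ∈ Finset.range (n + m + 1), g j = ∏ i ∈ Finset.range (n + 1), g (i + 1) := by
  have h1 : ∏ j ∈ Finset.range (n + m + 1), g j = ∏ j ∈ Finset.range (n + 2), g j := by
    refine (Finset.prod_subset (Finset.range_subset_range.2 (by omega)) ?_).symm
    intro x hx hx2
    exact ht x (by simp only [Finset.mem_range] at hx2 ⊢; omega)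
  rw [h1, Finset.prod_range_succ' g (n+1), h0, mul_one]

def extF (m : ℕ) (ℓ : Fin m → Fin m) (i : ℕ) : ℕ :=
  if h : i < m then (ℓ ⟨i, h⟩ : ℕ) else 0

lemma extF_coe (m : ℕ) (ℓ : Fin m → Fin m) (i : Fin m) : extF m ℓ (i : ℕ) = (ℓ i : ℕ) := by
  simp [extF, i.isLt]

lemma extF_lt (m : ℕ) (ℓ : Fin m → Fin m) {i : ℕ} (h : i < m) :
    extF m ℓ i = (ℓ ⟨i, h⟩ : ℕ) := by simp [extF, h]

lemma extF_ge (m : ℕ) (ℓ : Fin m → Fin m) {i : ℕ} (h : ¬ i < m) :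
    extF m ℓ i = 0 := by simp [extF, h]

def phiF (n k : ℕ) (ℓ : Fin (n+1) → Fin (n+1)) (j : Fin (n+k+1)) : Fin (n+k+1) :=
  if h : 1 ≤ (j : ℕ) ∧ (j : ℕ) ≤ n + 1 then
    ⟨(ℓ ⟨(j : ℕ) - 1, by omega⟩ : ℕ), by
      have := (ℓ ⟨(j : ℕ) - 1, by omega⟩).isLt; omega⟩
  else ⟨0, by omega⟩

def psiF (n k : ℕ) (ℓ' : Fin (n+k+1) → Fin (n+k+1)) (i : Fin (n+1)) : Fin (n+1) :=
  if h : (i : ℕ) + 1 < n + k + 1 then ⟨min (ℓ' ⟨(i : ℕ) + 1, h⟩ : ℕ) n, by omega⟩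
  else ⟨0, by omega⟩

lemma phiF_coe (n k : ℕ) (ℓ : Fin (n+1) → Fin (n+1)) (j : Fin (n+k+1)) :
    (phiF n k ℓ j : ℕ) =
      if 1 ≤ (j : ℕ) ∧ (j : ℕ) ≤ n + 1 then extF (n+1) ℓ ((j : ℕ) - 1) else 0 := by
  unfold phiF
  split_ifs with h
  · rw [extF_lt (n+1) ℓ (show (j : ℕ) - 1 < n + 1 by omega)]
  · rfl

lemma phiF_ext (n k : ℕ) (hk : 1 ≤ k) (ℓ : Fin (n+1) → Fin (n+1)) (j : ℕ) :
    extF (n+k+1) (phiF n k ℓ) j =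
      if 1 ≤ j ∧ j ≤ n + 1 then extF (n+1) ℓ (j - 1) else 0 := by
  by_cases h : j < n + k + 1
  · rw [extF_lt _ _ h, phiF_coe]
  · rw [extF_ge _ _ h, if_neg (by omega)]

lemma psiF_coe (n k : ℕ) (hk : 1 ≤ k) (ℓ' : Fin (n+k+1) → Fin (n+k+1))
    (hb : ∀ j, (ℓ' j : ℕ) ≤ n) (i : Fin (n+1)) :
    (psiF n k ℓ' i : ℕ) =
      (ℓ' ⟨(i : ℕ) + 1, by have := i.isLt; omega⟩ : ℕ) := by
  unfold psiF
  rw [dif_pos (show (i : ℕ) + 1 < n + k + 1 by have := i.isLt; omega)]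
  exact min_eq_left (hb _)

lemma psiF_ext (n k : ℕ) (hk : 1 ≤ k) (ℓ' : Fin (n+k+1) → Fin (n+k+1))
    (hb : ∀ j, (ℓ' j : ℕ) ≤ n)
    (ht : ∀ j : Fin (n+k+1), n + 2 ≤ (j : ℕ) → (ℓ' j : ℕ) = 0) (i : ℕ) :
    extF (n+1) (psiF n k ℓ') i = extF (n+k+1) ℓ' (i + 1) := by
  by_cases h : i < n + 1
  · rw [extF_lt _ _ h, psiF_coe n k hk ℓ' hb, extF_lt _ _ (show i + 1 < n + k + 1 by omega)]
  · rw [extF_ge _ _ h]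
    by_cases h2 : i + 1 < n + k + 1
    · rw [extF_lt _ _ h2]
      exact (ht ⟨i+1, h2⟩ (show n + 2 ≤ i + 1 by omega)).symm
    · rw [extF_ge _ _ h2]

lemma sum_phi {M : Type*} [AddCommMonoid M] (n k : ℕ) (hk : 1 ≤ k) (ℓ : Fin (n+1) → Fin (n+1))
    (F : ℕ → ℕ → M) (hF0 : ∀ i, F i 0 = 0) :
    ∑ j : Fin (n+k+1), F (j : ℕ) (phiF n k ℓ j : ℕ) =
      ∑ i : Fin (n+1), F ((i : ℕ) + 1) (ℓ i : ℕ) := by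
  calc ∑ j : Fin (n+k+1), F (j : ℕ) (phiF n k ℓ j : ℕ)
      = ∑ t ∈ Finset.range (n+k+1), F t (extF (n+k+1) (phiF n k ℓ) t) := by
        rw [← Fin.sum_univ_eq_sum_range (fun t => F t (extF (n+k+1) (phiF n k ℓ) t))]
        exact Finset.sum_congr rfl fun j _ => by rw [extF_coe]
    _ = ∑ i ∈ Finset.range (n+1), F (i+1) (extF (n+k+1) (phiF n k ℓ) (i+1)) := by
        refine shift_sum n k hk _ ?_ ?_
        · rw [phiF_ext n k hk, if_neg (by omega)]; exact hF0 0
        · intro j hj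
          rw [phiF_ext n k hk, if_neg (by omega)]; exact hF0 j
    _ = ∑ i ∈ Finset.range (n+1), F (i+1) (extF (n+1) ℓ i) := by
        refine Finset.sum_congr rfl fun i hi => ?_
        simp only [Finset.mem_range] at hi
        rw [phiF_ext n k hk, if_pos ⟨by omega, by omega⟩, Nat.add_sub_cancel]
    _ = ∑ i : Fin (n+1), F ((i : ℕ) + 1) (ℓ i : ℕ) := by
        rw [← Fin.sum_univ_eq_sum_range (fun i => F (i+1) (extF (n+1) ℓ i))]
        exact Finset.sum_congr rfl fun i _ => by rw [extF_coe]

lemma prod_phi {M : Type*} [CommMonoid M] (n k : ℕ) (hk : 1 ≤ k) (ℓ : Fin (n+1) → Fin (n+1))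
    (F : ℕ → ℕ → M) (hF0 : ∀ i, F i 0 = 1) :
    ∏ j : Fin (n+k+1), F (j : ℕ) (phiF n k ℓ j : ℕ) =
      ∏ i : Fin (n+1), F ((i : ℕ) + 1) (ℓ i : ℕ) := by
  calc ∏ j : Fin (n+k+1), F (j : ℕ) (phiF n k ℓ j : ℕ)
      = ∏ t ∈ Finset.range (n+k+1), F t (extF (n+k+1) (phiF n k ℓ) t) := by
        rw [← Fin.prod_univ_eq_prod_range (fun t => F t (extF (n+k+1) (phiF n k ℓ) t))]
        exact Finset.prod_congr rfl fun j _ => by rw [extF_coe]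
    _ = ∏ i ∈ Finset.range (n+1), F (i+1) (extF (n+k+1) (phiF n k ℓ) (i+1)) := by
        refine shift_prod n k hk _ ?_ ?_
        · rw [phiF_ext n k hk, if_neg (by omega)]; exact hF0 0
        · intro j hj
          rw [phiF_ext n k hk, if_neg (by omega)]; exact hF0 j
    _ = ∏ i ∈ Finset.range (n+1), F (i+1) (extF (n+1) ℓ i) := by
        refine Finset.prod_congr rfl fun i hi => ?_
        simp only [Finset.mem_range] at hi
        rw [phiF_ext n k hk, if_pos ⟨by omega, by omega⟩, Nat.add_sub_cancel]
    _ = ∏ i : Fin (n+1), F ((i : ℕ) + 1) (ℓ i : ℕ) := by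
        rw [← Fin.prod_univ_eq_prod_range (fun i => F (i+1) (extF (n+1) ℓ i))]
        exact Finset.prod_congr rfl fun i _ => by rw [extF_coe]
lemma bound_le (m k : ℕ) (ℓ' : Fin m → Fin m)
    (hs2 : (∑ i : Fin m, (ℓ' i : ℕ)) = k) : ∀ j, (ℓ' j : ℕ) ≤ k := by
  intro j
  rw [← hs2]
  exact Finset.single_le_sum (f := fun i => (ℓ' i : ℕ)) (fun _ _ => Nat.zero_le _)
    (Finset.mem_univ j)

lemma tail_zero (n k : ℕ) (ℓ' : Fin (n+k+1) → Fin (n+k+1))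
    (h0 : (ℓ' 0 : ℕ) = 0)
    (hs1 : (∑ i : Fin (n+k+1), (i : ℕ) * (ℓ' i : ℕ)) = n + k)
    (hs2 : (∑ i : Fin (n+k+1), (ℓ' i : ℕ)) = k) :
    ∀ j : Fin (n+k+1), n + 2 ≤ (j : ℕ) → (ℓ' j : ℕ) = 0 := by
  intro j hj
  have hle : ∀ i : Fin (n+k+1),
      ((ℓ' i : ℕ) + if i = j then (n+1) * (ℓ' j : ℕ) else 0) ≤ (i : ℕ) * (ℓ' i : ℕ) := by
    intro i
    by_cases hij : i = j
    · subst hij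
      rw [if_pos rfl]
      calc (ℓ' i : ℕ) + (n+1) * (ℓ' i : ℕ) = (n+2) * (ℓ' i : ℕ) := by ring
        _ ≤ (i : ℕ) * (ℓ' i : ℕ) := Nat.mul_le_mul_right _ hj
    · rw [if_neg hij, add_zero]
      rcases Nat.eq_zero_or_pos (i : ℕ) with h | h
      · have : i = 0 := Fin.ext (by simpa using h)
        rw [this, h0]
        exact Nat.zero_le _
      · exact Nat.le_mul_of_pos_left _ h
  have hsum := Finset.sum_le_sum (fun i (_ : i ∈ Finset.univ) => hle i)
  rw [Finset.sum_add_distrib, Finset.sum_ite_eq' Finset.univ j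
    (fun _ => (n+1) * (ℓ' j : ℕ)), hs1, hs2, if_pos (Finset.mem_univ j)] at hsum
  by_contra hne
  have h1 : 1 ≤ (ℓ' j : ℕ) := Nat.one_le_iff_ne_zero.2 hne
  have : n + 1 ≤ (n + 1) * (ℓ' j : ℕ) := Nat.le_mul_of_pos_right _ h1
  omega

lemma left_inv (n k : ℕ) (hk : 1 ≤ k) (ℓ : Fin (n+1) → Fin (n+1)) :
    psiF n k (phiF n k ℓ) = ℓ := by
  funext i
  apply Fin.ext
  have hi1 : (i : ℕ) + 1 < n + k + 1 := by have := i.isLt; omega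
  have hval : (phiF n k ℓ ⟨(i : ℕ) + 1, hi1⟩ : ℕ) = (ℓ i : ℕ) := by
    have hmk : ((⟨(i : ℕ) + 1, hi1⟩ : Fin (n+k+1)) : ℕ) = (i : ℕ) + 1 := rfl
    rw [phiF_coe, hmk, if_pos ⟨by omega, by have := i.isLt; omega⟩]
    rw [Nat.add_sub_cancel, extF_coe]
  show (psiF n k (phiF n k ℓ) i : ℕ) = (ℓ i : ℕ)
  unfold psiF
  rw [dif_pos hi1]
  show min (phiF n k ℓ ⟨(i : ℕ) + 1, hi1⟩ : ℕ) n = _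
  rw [hval]
  exact min_eq_left (by have := (ℓ i).isLt; omega)

lemma right_inv (n k : ℕ) (hk : 1 ≤ k) (ℓ' : Fin (n+k+1) → Fin (n+k+1))
    (hb : ∀ j, (ℓ' j : ℕ) ≤ n)
    (ht : ∀ j : Fin (n+k+1), n + 2 ≤ (j : ℕ) → (ℓ' j : ℕ) = 0)
    (h0 : (ℓ' 0 : ℕ) = 0) :
    phiF n k (psiF n k ℓ') = ℓ' := by
  funext j
  apply Fin.ext
  rw [phiF_coe]
  split_ifs with h
  · rw [psiF_ext n k hk ℓ' hb ht, show (j : ℕ) - 1 + 1 = (j : ℕ) by omega, extF_coe]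
  · rcases Nat.eq_zero_or_pos (j : ℕ) with hz | hpos
    · have : j = 0 := Fin.ext (by simpa using hz)
      rw [this, h0]
    · exact (ht j (by omega)).symm


open Finset

lemma bellB_eq_filter (n k : ℕ) (x : ℕ → ℝ) :
    bellB n k x = ∑ ℓ ∈ Finset.univ.filter
      (fun ℓ : Fin (n+1) → Fin (n+1) =>
        (ℓ 0 : ℕ) = 0 ∧ (∑ i : Fin (n + 1), (i : ℕ) * (ℓ i : ℕ)) = n ∧
          (∑ i : Fin (n + 1), (ℓ i : ℕ)) = k),
      (n.factorial : ℝ) / (∏ i : Fin (n + 1), ((ℓ i : ℕ).factorial : ℝ)) *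
        ∏ i : Fin (n + 1), (x (i : ℕ) / ((i : ℕ).factorial : ℝ)) ^ (ℓ i : ℕ) := by
  rw [bellB, Finset.sum_filter]

theorem stmt_4 (n k : ℕ) (hk : 1 ≤ k) (hkn : k ≤ n) (x : ℕ → ℝ) :
    bellB n k (fun i => x (i + 1) / ((i : ℝ) + 1)) =
      ((n.factorial : ℝ) / ((n + k).factorial : ℝ)) *
        bellB (n + k) k (fun i => if i = 1 then 0 else x i) := by
  have hn1 : 1 ≤ n := hk.trans hkn
  have h1' : (1 : ℕ) < n + k + 1 := by omega
  simp only [bellB_eq_filter, Finset.mul_sum]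
  have hsub : (Finset.univ.filter
      (fun ℓ' : Fin (n+k+1) → Fin (n+k+1) =>
        ((ℓ' 0 : ℕ) = 0 ∧ (∑ i : Fin (n+k+1), (i : ℕ) * (ℓ' i : ℕ)) = n + k ∧
          (∑ i : Fin (n+k+1), (ℓ' i : ℕ)) = k) ∧ (ℓ' ⟨1, h1'⟩ : ℕ) = 0)) ⊆
      (Finset.univ.filter
      (fun ℓ' : Fin (n+k+1) → Fin (n+k+1) =>
        (ℓ' 0 : ℕ) = 0 ∧ (∑ i : Fin (n+k+1), (i : ℕ) * (ℓ' i : ℕ)) = n + k ∧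
          (∑ i : Fin (n+k+1), (ℓ' i : ℕ)) = k)) := by
    intro a ha
    simp only [Finset.mem_filter] at ha ⊢
    exact ⟨ha.1, ha.2.1⟩
  have hshrink := Finset.sum_subset hsub
    (f := fun ℓ' : Fin (n+k+1) → Fin (n+k+1) =>
      (n.factorial : ℝ) / ((n + k).factorial : ℝ) *
        (((n + k).factorial : ℝ) / (∏ i : Fin (n+k+1), ((ℓ' i : ℕ).factorial : ℝ)) *
          ∏ i : Fin (n+k+1),
            ((if (i : ℕ) = 1 then 0 else x (i : ℕ)) / ((i : ℕ).factorial : ℝ)) ^ (ℓ' i : ℕ)))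
    (by
      intro ℓ' hmem hnot
      simp only [Finset.mem_filter] at hmem hnot
      have h1 : (ℓ' ⟨1, h1'⟩ : ℕ) ≠ 0 := by tauto
      have hz : ∏ i : Fin (n+k+1),
          ((if (i : ℕ) = 1 then 0 else x (i : ℕ)) / ((i : ℕ).factorial : ℝ)) ^ (ℓ' i : ℕ) = 0 := by
        apply Finset.prod_eq_zero (Finset.mem_univ (⟨1, h1'⟩ : Fin (n+k+1)))
        have hmk : ((⟨1, h1'⟩ : Fin (n+k+1)) : ℕ) = 1 := rfl
        rw [hmk, if_pos rfl]
        simp [zero_pow h1]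
      simp only [hz, mul_zero])
  rw [← hshrink]
  refine Finset.sum_nbij' (phiF n k) (psiF n k) ?_ ?_ ?_ ?_ ?_
  · -- hi : φ ℓ lands in T'
    intro ℓ hℓ
    simp only [Finset.mem_filter] at hℓ ⊢
    obtain ⟨-, h0, hs1, hs2⟩ := hℓ
    have e0 : extF (n+1) ℓ 0 = 0 := by
      rw [extF_lt _ _ (show 0 < n+1 by omega)]
      have hmk0 : ∀ h : 0 < n + 1, (⟨0, h⟩ : Fin (n+1)) = 0 := fun h => Fin.ext (by simp)
      rw [hmk0, h0]
    refine ⟨Finset.mem_univ _, ⟨?_, ?_, ?_⟩, ?_⟩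
    · rw [phiF_coe]
      simp only [Fin.val_zero]
      exact if_neg (by omega)
    · rw [show (∑ j : Fin (n+k+1), (j : ℕ) * (phiF n k ℓ j : ℕ)) =
          ∑ i : Fin (n+1), ((i : ℕ) + 1) * (ℓ i : ℕ) from
          sum_phi n k hk ℓ (fun i v => i * v) (fun i => by simp)]
      have hpt : ∀ i : Fin (n+1), ((i : ℕ) + 1) * (ℓ i : ℕ) =
          (i : ℕ) * (ℓ i : ℕ) + (ℓ i : ℕ) := fun i => by ring
      rw [Finset.sum_congr rfl (fun i _ => hpt i), Finset.sum_add_distrib, hs1, hs2]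
    · rw [show (∑ j : Fin (n+k+1), (phiF n k ℓ j : ℕ)) =
          ∑ i : Fin (n+1), (ℓ i : ℕ) from
          sum_phi n k hk ℓ (fun _ v => v) (fun _ => rfl)]
      exact hs2
    · have hmk : ((⟨1, h1'⟩ : Fin (n+k+1)) : ℕ) = 1 := rfl
      rw [phiF_coe, hmk, if_pos ⟨le_refl 1, by omega⟩]
      simpa using e0
  · -- hj : ψ ℓ' lands in S
    intro ℓ' hℓ'
    simp only [Finset.mem_filter] at hℓ' ⊢
    obtain ⟨-, ⟨h0', hs1', hs2'⟩, h1z⟩ := hℓ'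
    have hbn : ∀ j, (ℓ' j : ℕ) ≤ n := fun j => (bound_le _ k ℓ' hs2' j).trans hkn
    have ht := tail_zero n k ℓ' h0' hs1' hs2'
    have hri := right_inv n k hk ℓ' hbn ht h0'
    refine ⟨Finset.mem_univ _, ?_, ?_, ?_⟩
    · have hmk : ∀ h : ((0 : Fin (n+1)) : ℕ) + 1 < n + k + 1,
          (⟨((0 : Fin (n+1)) : ℕ) + 1, h⟩ : Fin (n+k+1)) = ⟨1, h1'⟩ := fun h => Fin.ext (by simp)
      rw [psiF_coe n k hk ℓ' hbn 0, hmk, h1z]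
    · have hs := sum_phi n k hk (psiF n k ℓ') (fun i v => (i - 1) * v) (fun i => by simp)
      rw [hri] at hs
      have hpt : ∀ j : Fin (n+k+1), ((j : ℕ) - 1) * (ℓ' j : ℕ) + (ℓ' j : ℕ) =
          (j : ℕ) * (ℓ' j : ℕ) := by
        intro j
        rcases Nat.eq_zero_or_pos (j : ℕ) with hz | hp
        · have hj0 : j = 0 := Fin.ext (by simpa using hz)
          rw [hj0, h0']
          simp
        · have h2 : (j : ℕ) - 1 + 1 = (j : ℕ) := by omega
          calc ((j : ℕ) - 1) * (ℓ' j : ℕ) + (ℓ' j : ℕ)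
              = ((j : ℕ) - 1 + 1) * (ℓ' j : ℕ) := by ring
            _ = _ := by rw [h2]
      have hsum' : ∑ j : Fin (n+k+1), ((j : ℕ) - 1) * (ℓ' j : ℕ) = n := by
        have hcg := Finset.sum_congr rfl
          (fun j (_ : j ∈ Finset.univ) => (hpt j).symm)
        rw [hs1', Finset.sum_add_distrib, hs2'] at hcg
        omega
      rw [hs] at hsum'
      simpa using hsum'
    · have hs := sum_phi n k hk (psiF n k ℓ') (fun _ v => v) (fun _ => rfl)
      rw [hri] at hs
      rw [← hs]
      exact hs2'
  · exact fun ℓ _ => left_inv n k hk ℓ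
  · intro ℓ' hℓ'
    simp only [Finset.mem_filter] at hℓ'
    obtain ⟨-, ⟨h0', hs1', hs2'⟩, h1z⟩ := hℓ'
    have hbn : ∀ j, (ℓ' j : ℕ) ≤ n := fun j => (bound_le _ k ℓ' hs2' j).trans hkn
    exact right_inv n k hk ℓ' hbn (tail_zero n k ℓ' h0' hs1' hs2') h0'
  · -- term equality
    intro ℓ hℓ
    simp only [Finset.mem_filter] at hℓ
    obtain ⟨-, h0, hs1, hs2⟩ := hℓ
    have Pfac : ∏ j : Fin (n+k+1), ((phiF n k ℓ j : ℕ).factorial : ℝ) =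
        ∏ i : Fin (n+1), ((ℓ i : ℕ).factorial : ℝ) :=
      prod_phi n k hk ℓ (fun _ v => (v.factorial : ℝ)) (fun _ => by simp)
    have Pmain : ∏ j : Fin (n+k+1),
        ((if (j : ℕ) = 1 then 0 else x (j : ℕ)) / ((j : ℕ).factorial : ℝ)) ^ (phiF n k ℓ j : ℕ) =
        ∏ i : Fin (n+1),
        ((if (i : ℕ) + 1 = 1 then 0 else x ((i : ℕ) + 1)) / (((i : ℕ) + 1).factorial : ℝ)) ^ (ℓ i : ℕ) :=
      prod_phi n k hk ℓ (fun t v => ((if t = 1 then 0 else x t) / (t.factorial : ℝ)) ^ v)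
        (fun t => pow_zero _)
    have Pmain2 : ∏ i : Fin (n+1),
        ((if (i : ℕ) + 1 = 1 then 0 else x ((i : ℕ) + 1)) / (((i : ℕ) + 1).factorial : ℝ)) ^ (ℓ i : ℕ) =
        ∏ i : Fin (n+1),
        (x ((i : ℕ) + 1) / (((i : ℕ) : ℝ) + 1) / (((i : ℕ)).factorial : ℝ)) ^ (ℓ i : ℕ) := by
      refine Finset.prod_congr rfl fun i _ => ?_
      rcases Nat.eq_zero_or_pos (i : ℕ) with hz | hp
      · have hi0 : i = 0 := Fin.ext (by simpa using hz)
        rw [hi0, h0]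
        simp
      · have hne : ¬((i : ℕ) + 1 = 1) := by omega
        rw [if_neg hne]
        congr 1
        rw [div_div]
        congr 1
        rw [Nat.factorial_succ]
        push_cast
        ring
    rw [Pfac, Pmain, Pmain2]
    have hD : (0 : ℝ) < ∏ i : Fin (n+1), ((ℓ i : ℕ).factorial : ℝ) :=
      Finset.prod_pos fun i _ => by positivity
    have hF : ((n + k).factorial : ℝ) ≠ 0 := Nat.cast_ne_zero.2 (Nat.factorial_ne_zero _)
    field_simp
end

section
/- For all integers n ≥ k ≥ 1, the number of partitions of an n-element set into k blocks each of size at least 2 equals ∑_{i=0}^{k} (-1)^i · C(n,i) · S(n−i, k−i), where S denotes the Stirling numbers of the second kind. -/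
open Finset

section Aux
open Function
set_option linter.unusedSectionVars false

variable {α : Type*} [DecidableEq α]

/-- The fiber of `c` under `f : ↥s → Fin j`, as a finset of `α`. -/
def fiberOf {s : Finset α} {j : ℕ} (f : ↥s → Fin j) (c : Fin j) : Finset α :=
  (univ.filter fun x : ↥s => f x = c).map (Embedding.subtype _)

lemma mem_fiberOf {s : Finset α} {j : ℕ} {f : ↥s → Fin j} {c : Fin j} {a : α} :
    a ∈ fiberOf f c ↔ ∃ h : a ∈ s, f ⟨a, h⟩ = c := by
  simp [fiberOf]

lemma self_mem_fiberOf {s : Finset α} {j : ℕ} (f : ↥s → Fin j) (x : ↥s) :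
    (x : α) ∈ fiberOf f (f x) := mem_fiberOf.2 ⟨x.2, rfl⟩

/-- The partition of `s` into fibers of `f` (empty fibers removed). -/
def fpart {s : Finset α} {j : ℕ} (f : ↥s → Fin j) : Finpartition s :=
  Finpartition.ofErase (univ.image (fiberOf f))
    (by
      rw [Finset.supIndep_iff_pairwiseDisjoint]
      intro p hp q hq hpq
      simp only [coe_image, Set.mem_image] at hp hq
      obtain ⟨c, -, rfl⟩ := hp
      obtain ⟨d, -, rfl⟩ := hq
      simp only [onFun, id_eq]
      rw [Finset.disjoint_left]
      intro a ha ha'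
      obtain ⟨h1, h2⟩ := mem_fiberOf.1 ha
      obtain ⟨h1', h2'⟩ := mem_fiberOf.1 ha'
      exact hpq (by rw [← h2, h2'])
    )
    (by
      apply le_antisymm
      · intro a ha
        rw [Finset.mem_sup] at ha
        obtain ⟨p, hp, hap⟩ := ha
        obtain ⟨c, -, rfl⟩ := mem_image.1 hp
        exact (mem_fiberOf.1 hap).1
      · intro a ha
        rw [Finset.mem_sup]
        exact ⟨fiberOf f (f ⟨a, ha⟩), mem_image_of_mem _ (mem_univ _),
          self_mem_fiberOf f ⟨a, ha⟩⟩)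

lemma fpart_parts {s : Finset α} {j : ℕ} (f : ↥s → Fin j) (hf : Surjective f) :
    (fpart f).parts = univ.image (fiberOf f) := by
  rw [fpart, Finpartition.ofErase_parts]
  apply erase_eq_of_notMem
  simp only [bot_eq_empty, mem_image]
  rintro ⟨c, -, hc⟩
  obtain ⟨x, hx⟩ := hf c
  have := self_mem_fiberOf f x
  rw [hx, hc] at this
  exact notMem_empty _ this

lemma fiberOf_injective {s : Finset α} {j : ℕ} {f : ↥s → Fin j} (hf : Surjective f) :
    Injective (fiberOf f) := by
  intro c d hcd
  obtain ⟨x, hx⟩ := hf c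
  have h1 := self_mem_fiberOf f x
  rw [hx, hcd] at h1
  obtain ⟨h2, h3⟩ := mem_fiberOf.1 h1
  rw [← hx, ← h3]


lemma fpart_parts_card {s : Finset α} {j : ℕ} (f : ↥s → Fin j) (hf : Surjective f) :
    #(fpart f).parts = j := by
  rw [fpart_parts f hf, Finset.card_image_of_injective _ (fiberOf_injective hf), card_univ,
    Fintype.card_fin]

variable {s : Finset α} {j : ℕ}

noncomputable def labelOf {f : ↥s → Fin j} (hf : Surjective f)
    {P : Finpartition s} (hP : fpart f = P) : Fin j → ↥P.parts := fun c =>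
  ⟨fiberOf f c, by rw [← hP, fpart_parts f hf]; exact mem_image_of_mem _ (mem_univ _)⟩

lemma labelOf_bijective {f : ↥s → Fin j} (hf : Surjective f)
    {P : Finpartition s} (hP : fpart f = P) : Bijective (labelOf hf hP) := by
  constructor
  · intro c d h
    exact fiberOf_injective hf (Subtype.ext_iff.1 h)
  · intro p
    have hp : (p : Finset α) ∈ univ.image (fiberOf f) := by
      rw [← fpart_parts f hf, hP]; exact p.2
    obtain ⟨c, -, hc⟩ := mem_image.1 hp
    exact ⟨c, Subtype.ext hc⟩

def funOf (P : Finpartition s) (e : ↥P.parts → Fin j) (x : ↥s) : Fin j :=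
  e ⟨P.part ↑x, P.part_mem.2 x.2⟩

lemma funOf_surjective (P : Finpartition s) (e : ↥P.parts ≃ Fin j) :
    Surjective (funOf P (⇑e)) := by
  intro c
  obtain ⟨a, ha⟩ := P.nonempty_of_mem_parts (e.symm c).2
  have has : a ∈ s := P.le (e.symm c).2 ha
  refine ⟨⟨a, has⟩, ?_⟩
  rw [funOf]
  have h : (⟨P.part a, P.part_mem.2 has⟩ : ↥P.parts) = e.symm c :=
    Subtype.ext (P.part_eq_of_mem (e.symm c).2 ha)
  rw [h, e.apply_symm_apply]

lemma fiberOf_funOf (P : Finpartition s) (e : ↥P.parts ≃ Fin j) (c : Fin j) :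
    fiberOf (funOf P (⇑e)) c = ((e.symm c : ↥P.parts) : Finset α) := by
  ext a
  rw [mem_fiberOf]
  constructor
  · rintro ⟨h, hc⟩
    rw [funOf] at hc
    have h2 : (⟨P.part a, P.part_mem.2 h⟩ : ↥P.parts) = e.symm c := by
      rw [← hc, e.symm_apply_apply]
    have h3 := congrArg Subtype.val h2
    dsimp only at h3
    rw [← h3]
    exact P.mem_part h
  · intro ha
    have has : a ∈ s := P.le (e.symm c).2 ha
    refine ⟨has, ?_⟩
    rw [funOf]
    have h : (⟨P.part a, P.part_mem.2 has⟩ : ↥P.parts) = e.symm c :=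
      Subtype.ext (P.part_eq_of_mem (e.symm c).2 ha)
    rw [h, e.apply_symm_apply]

lemma fpart_funOf (P : Finpartition s) (e : ↥P.parts ≃ Fin j) :
    fpart (funOf P (⇑e)) = P := by
  apply Finpartition.ext
  rw [fpart_parts _ (funOf_surjective P e)]
  ext p
  simp only [mem_image, mem_univ, true_and]
  constructor
  · rintro ⟨c, rfl⟩
    rw [fiberOf_funOf]
    exact (e.symm c).2
  · intro hp
    exact ⟨e ⟨p, hp⟩, by rw [fiberOf_funOf, e.symm_apply_apply]⟩

lemma card_fiber (P : Finpartition s) (hPj : #P.parts = j) :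
    #(univ.filter fun f : ↥s → Fin j => Surjective f ∧ fpart f = P) = j.factorial := by
  classical
  have hcard : Fintype.card ↥P.parts = j := by rw [Fintype.card_coe, hPj]
  have hc : #(univ : Finset (↥P.parts ≃ Fin j)) = j.factorial := by
    rw [card_univ, Fintype.card_equiv (Fintype.equivFinOfCardEq hcard), hcard]
  rw [← hc]
  refine Finset.card_bij'
    (i := fun f hf => (Equiv.ofBijective _
      (labelOf_bijective (mem_filter.1 hf).2.1 (mem_filter.1 hf).2.2)).symm)
    (j := fun e _ => funOf P (⇑e))
    (fun f hf => mem_univ _) (fun e he => ?_) (fun f hf => ?_) (fun e he => ?_)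
  · rw [mem_filter]
    exact ⟨mem_univ _, funOf_surjective P e, fpart_funOf P e⟩
  · -- left inverse : funOf P (ofBijective labelOf).symm = f
    obtain ⟨-, hf, hP⟩ := mem_filter.1 hf
    funext x
    beta_reduce
    rw [funOf]
    rw [Equiv.symm_apply_eq, Equiv.ofBijective_apply]
    apply Subtype.ext
    show P.part ↑x = fiberOf f (f x)
    refine P.part_eq_of_mem ?_ (self_mem_fiberOf f x)
    rw [← hP, fpart_parts f hf]
    exact mem_image_of_mem _ (mem_univ _)
  · -- right inverse
    refine Equiv.ext fun p => ?_
    beta_reduce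
    rw [Equiv.symm_apply_eq, Equiv.ofBijective_apply]
    apply Subtype.ext
    show (p : Finset α) = fiberOf (funOf P (⇑e)) (e p)
    rw [fiberOf_funOf, e.symm_apply_apply]

lemma card_surj (s : Finset α) (j : ℕ) :
    #(univ.filter fun f : ↥s → Fin j => Surjective f)
      = j.factorial * #(univ.filter fun P : Finpartition s => #P.parts = j) := by
  classical
  rw [Finset.card_eq_sum_card_fiberwise
    (f := fun f : ↥s → Fin j => fpart f)
    (t := univ.filter fun P : Finpartition s => #P.parts = j)
    (fun f hf => by
      rw [mem_coe, mem_filter]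
      exact ⟨mem_univ _, fpart_parts_card f (mem_filter.1 (mem_coe.1 hf)).2⟩)]
  rw [Finset.sum_congr rfl (fun P hP => ?_), Finset.sum_const, smul_eq_mul, mul_comm]
  rw [Finset.filter_filter]
  exact card_fiber P (mem_filter.1 hP).2



lemma surj_count (α : Type*) [Fintype α] [DecidableEq α] (j : ℕ) :
    (#(univ.filter fun f : α → Fin j => Surjective f) : ℤ) =
      ∑ i ∈ Finset.range (j + 1),
        (-1 : ℤ) ^ i * (j.choose i) * ((j - i : ℕ) : ℤ) ^ (Fintype.card α) := by
  classical
  set S : Fin j → Finset (α → Fin j) := fun c => univ.filter fun f => ∀ x, f x ≠ c with hS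
  have h1 : univ.filter (fun f : α → Fin j => Surjective f)
      = (univ : Finset (Fin j)).inf fun c => (S c)ᶜ := by
    ext f
    simp only [mem_filter, mem_univ, true_and, Finset.mem_inf, Finset.mem_compl, hS,
      not_forall, not_not, Surjective]
    convert (Finset.mem_filter (s := (univ : Finset (α → Fin j)))
      (p := fun f : α → Fin j => ∀ b, ∃ a, f a = b) (a := f)).trans
      (⟨fun h i _ => h.2 i, fun h => ⟨mem_univ _, fun i => h i trivial⟩⟩ :
        _ ↔ ∀ i : Fin j, True → ∃ x, f x = i)
    congr
  have h2 : ∀ t : Finset (Fin j), t.inf S = Fintype.piFinset fun _ : α => tᶜ := by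
    intro t; ext f
    simp only [Finset.mem_inf, hS, mem_filter, mem_univ, true_and, Fintype.mem_piFinset,
      Finset.mem_compl]
    exact ⟨fun h x hx => h _ hx x rfl, fun h c hc x hfx => h x (hfx ▸ hc)⟩
  have h3 : ∀ t : Finset (Fin j), #(t.inf S) = (j - #t) ^ (Fintype.card α) := by
    intro t
    rw [h2, Fintype.card_piFinset]
    simp [Finset.card_compl]
  rw [h1, Finset.inclusion_exclusion_card_inf_compl, Finset.sum_powerset]
  rw [card_univ, Fintype.card_fin]
  refine Finset.sum_congr rfl fun i hi => ?_
  rw [Finset.sum_congr rfl (fun t ht => by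
    rw [h3 t, (Finset.mem_powersetCard.1 ht).2])]
  rw [Finset.sum_const, Finset.card_powersetCard, card_univ, Fintype.card_fin]
  push_cast
  ring


lemma npart_eq (s : Finset α) (j : ℕ) :
    (#(univ.filter fun P : Finpartition s => #P.parts = j) : ℝ) = stirlingS #s j := by
  have h := surj_count ↥s j
  rw [card_surj s j, Fintype.card_coe] at h
  have h2 : ((j.factorial : ℝ)) * (#(univ.filter fun P : Finpartition s => #P.parts = j) : ℝ)
      = ∑ i ∈ Finset.range (j + 1), (-1 : ℝ) ^ i * (j.choose i) * ((j - i : ℕ) : ℝ) ^ (#s) := by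
    calc ((j.factorial : ℝ)) * (#(univ.filter fun P : Finpartition s => #P.parts = j) : ℝ)
        = ((j.factorial * #(univ.filter fun P : Finpartition s => #P.parts = j) : ℕ) : ℤ) := by
          push_cast; ring
      _ = _ := by
          rw [h]; push_cast; ring
  have h3 : ∑ i ∈ Finset.range (j + 1), (-1 : ℝ) ^ i * (j.choose i) * ((j - i : ℕ) : ℝ) ^ (#s)
      = ∑ l ∈ Finset.range (j + 1), (-1 : ℝ) ^ (j - l) * (j.choose l) * (l : ℝ) ^ (#s) := by
    rw [← Finset.sum_range_reflect]
    refine Finset.sum_congr rfl fun l hl => ?_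
    rw [Finset.mem_range] at hl
    have hlj : l ≤ j := Nat.lt_succ_iff.1 hl
    rw [Nat.succ_sub_one] at *
    rw [Nat.choose_symm hlj]
    rw [Nat.sub_sub_self hlj]
  rw [stirlingS, ← h3, ← h2]
  field_simp

variable [Fintype α]

lemma filter_not_free (t : Finset α) (P : Finpartition (univ : Finset α))
    (hP : ∀ x ∈ t, ({x} : Finset α) ∈ P.parts) :
    P.parts.filter (fun b => ¬ ∀ x ∈ t, x ∉ b) = t.image (fun x => ({x} : Finset α)) := by
  ext b
  simp only [mem_filter, not_forall, not_not, mem_image, exists_prop]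
  constructor
  · rintro ⟨hb, x, hxt, hxb⟩
    exact ⟨x, hxt, P.eq_of_mem_parts (hP x hxt) hb (mem_singleton_self x) hxb⟩
  · rintro ⟨x, hxt, rfl⟩
    exact ⟨hP x hxt, x, hxt, mem_singleton_self x⟩

/-- Strip the singleton parts at elements of `t`. -/
def stripSingles (t : Finset α) (P : Finpartition (univ : Finset α))
    (hP : ∀ x ∈ t, ({x} : Finset α) ∈ P.parts) : Finpartition ((univ : Finset α) \ t) :=
  P.ofSubset (parts := P.parts.filter fun b => ∀ x ∈ t, x ∉ b) (filter_subset _ _)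
    (by
      apply le_antisymm
      · intro z hz
        rw [Finset.mem_sup] at hz
        obtain ⟨b, hb, hzb⟩ := hz
        rw [mem_filter] at hb
        rw [mem_sdiff]
        exact ⟨mem_univ _, fun hzt => hb.2 z hzt hzb⟩
      · intro z hz
        rw [mem_sdiff] at hz
        rw [Finset.mem_sup]
        refine ⟨P.part z, ?_, P.mem_part (mem_univ z)⟩
        rw [mem_filter]
        refine ⟨P.part_mem.2 (mem_univ z), fun x hxt hxp => ?_⟩
        have h1 : P.part z = {x} :=
          P.eq_of_mem_parts (P.part_mem.2 (mem_univ z)) (hP x hxt) hxp (mem_singleton_self x)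
        have := P.mem_part (mem_univ z)
        rw [h1, mem_singleton] at this
        exact hz.2 (this ▸ hxt))

lemma stripSingles_parts_card (t : Finset α) (k : ℕ) (P : Finpartition (univ : Finset α))
    (hP : ∀ x ∈ t, ({x} : Finset α) ∈ P.parts) (hPk : #P.parts = k) :
    #(stripSingles t P hP).parts = k - #t := by
  have hsplit : #(P.parts.filter fun b => ∀ x ∈ t, x ∉ b)
      + #(P.parts.filter fun b => ¬ ∀ x ∈ t, x ∉ b) = #P.parts :=
    Finset.card_filter_add_card_filter_not _
  rw [filter_not_free t P hP, Finset.card_image_of_injective _ Finset.singleton_injective,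
    hPk] at hsplit
  have : #(stripSingles t P hP).parts
      = #(P.parts.filter fun b => ∀ x ∈ t, x ∉ b) := rfl
  omega

/-- Add back singleton parts at elements of `t`. -/
def addSingles (t : Finset α) (Q : Finpartition ((univ : Finset α) \ t)) :
    Finpartition (univ : Finset α) where
  parts := Q.parts ∪ t.image fun x => ({x} : Finset α)
  supIndep := by
    rw [Finset.supIndep_iff_pairwiseDisjoint]
    intro p hp q hq hpq
    simp only [coe_union, Set.mem_union, mem_coe, coe_image, Set.mem_image] at hp hq
    simp only [onFun, id_eq]
    have hsub : ∀ b ∈ Q.parts, b ⊆ univ \ t := fun b hb => Q.le hb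
    rcases hp with hp | ⟨x, hxt, rfl⟩ <;> rcases hq with hq | ⟨y, hyt, rfl⟩
    · exact Q.disjoint hp hq hpq
    · rw [Finset.disjoint_singleton_right]
      intro hyb
      exact (mem_sdiff.1 (hsub _ hp hyb)).2 hyt
    · rw [Finset.disjoint_singleton_left]
      intro hxb
      exact (mem_sdiff.1 (hsub _ hq hxb)).2 hxt
    · rw [Finset.disjoint_singleton_left, mem_singleton]
      intro h
      exact hpq (by rw [h])
  sup_parts := by
    ext z
    simp only [mem_univ, iff_true, Finset.mem_sup]
    by_cases hzt : z ∈ t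
    · exact ⟨{z}, Finset.mem_union_right _ (mem_image_of_mem _ hzt), mem_singleton_self z⟩
    · have hz' : z ∈ (univ : Finset α) \ t := mem_sdiff.2 ⟨mem_univ z, hzt⟩
      exact ⟨Q.part z, Finset.mem_union_left _ (Q.part_mem.2 hz'), Q.mem_part hz'⟩
  bot_notMem := by
    rw [Finset.mem_union]
    rintro (h | h)
    · exact Q.bot_notMem h
    · obtain ⟨x, -, hx⟩ := mem_image.1 h
      exact Finset.singleton_ne_empty x hx

lemma addSingles_parts_card (t : Finset α) (Q : Finpartition ((univ : Finset α) \ t)) :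
    #(addSingles t Q).parts = #Q.parts + #t := by
  show #(Q.parts ∪ t.image fun x => ({x} : Finset α)) = _
  rw [Finset.card_union_of_disjoint, Finset.card_image_of_injective _ Finset.singleton_injective]
  rw [Finset.disjoint_right]
  rintro b hb hbQ
  obtain ⟨x, hxt, rfl⟩ := mem_image.1 hb
  have := Q.le hbQ (mem_singleton_self x)
  exact (mem_sdiff.1 this).2 hxt

lemma singleton_mem_addSingles (t : Finset α) (Q : Finpartition ((univ : Finset α) \ t))
    {x : α} (hx : x ∈ t) : ({x} : Finset α) ∈ (addSingles t Q).parts :=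
  Finset.mem_union_right _ (mem_image_of_mem _ hx)

lemma Mcount (t : Finset α) (k : ℕ) (ht : #t ≤ k) :
    #(univ.filter fun P : Finpartition (univ : Finset α) =>
        #P.parts = k ∧ ∀ x ∈ t, ({x} : Finset α) ∈ P.parts)
      = #(univ.filter fun Q : Finpartition ((univ : Finset α) \ t) =>
          #Q.parts = k - #t) := by
  refine Finset.card_bij'
    (i := fun P hP => stripSingles t P (mem_filter.1 hP).2.2)
    (j := fun Q _ => addSingles t Q) (fun P hP => ?_) (fun Q hQ => ?_)
    (fun P hP => ?_) (fun Q hQ => ?_)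
  · rw [mem_filter]
    exact ⟨mem_univ _, stripSingles_parts_card t k P _ (mem_filter.1 hP).2.1⟩
  · rw [mem_filter]
    obtain ⟨-, hQk⟩ := mem_filter.1 hQ
    refine ⟨mem_univ _, ?_, fun x hx => singleton_mem_addSingles t Q hx⟩
    rw [addSingles_parts_card, hQk]
    omega
  · -- addSingles ∘ stripSingles = id
    obtain ⟨-, hPk, hPs⟩ := mem_filter.1 hP
    apply Finpartition.ext
    show (stripSingles t P hPs).parts ∪ t.image (fun x => ({x} : Finset α)) = P.parts
    rw [← filter_not_free t P hPs]
    exact Finset.filter_union_filter_not_eq (p := fun b => ∀ x ∈ t, x ∉ b) _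
  · -- stripSingles ∘ addSingles = id
    apply Finpartition.ext
    show ((addSingles t Q).parts.filter fun b => ∀ x ∈ t, x ∉ b) = Q.parts
    show ((Q.parts ∪ t.image fun x => ({x} : Finset α)).filter fun b => ∀ x ∈ t, x ∉ b)
      = Q.parts
    rw [Finset.filter_union]
    have h1 : (Q.parts.filter fun b => ∀ x ∈ t, x ∉ b) = Q.parts := by
      apply Finset.filter_true_of_mem
      intro b hb x hxt hxb
      exact (mem_sdiff.1 (Q.le hb hxb)).2 hxt
    have h2 : ((t.image fun x => ({x} : Finset α)).filter fun b => ∀ x ∈ t, x ∉ b) = ∅ := by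
      rw [Finset.filter_eq_empty_iff]
      rintro b hb
      obtain ⟨x, hxt, rfl⟩ := mem_image.1 hb
      simp only [not_forall, not_not]
      exact ⟨x, hxt, mem_singleton_self x⟩
    rw [h1, h2, Finset.union_empty]

lemma Mzero (t : Finset α) (k : ℕ) (ht : k < #t) :
    #(univ.filter fun P : Finpartition (univ : Finset α) =>
        #P.parts = k ∧ ∀ x ∈ t, ({x} : Finset α) ∈ P.parts) = 0 := by
  rw [Finset.card_eq_zero, Finset.filter_eq_empty_iff]
  rintro P - ⟨hPk, hPs⟩
  have hsub : t.image (fun x => ({x} : Finset α)) ⊆ P.parts := by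
    intro b hb
    obtain ⟨x, hxt, rfl⟩ := mem_image.1 hb
    exact hPs x hxt
  have := Finset.card_le_card hsub
  rw [Finset.card_image_of_injective _ Finset.singleton_injective, hPk] at this
  omega

lemma McountFin {n : ℕ} (t : Finset (Fin n)) (k : ℕ) (ht : #t ≤ k) :
    #(univ.filter fun P : Finpartition (univ : Finset (Fin n)) =>
        #P.parts = k ∧ ∀ x ∈ t, ({x} : Finset (Fin n)) ∈ P.parts)
      = #(univ.filter fun Q : Finpartition ((univ : Finset (Fin n)) \ t) =>
          #Q.parts = k - #t) := by
  have h := Mcount t k ht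
  convert h using 2 <;>
    first
      | rfl
      | exact Finset.filter_congr_decidable _ _ _
      | exact (Finset.filter_congr_decidable _ _ _).symm

lemma MzeroFin {n : ℕ} (t : Finset (Fin n)) (k : ℕ) (ht : k < #t) :
    #(univ.filter fun P : Finpartition (univ : Finset (Fin n)) =>
        #P.parts = k ∧ ∀ x ∈ t, ({x} : Finset (Fin n)) ∈ P.parts) = 0 := by
  have h := Mzero t k ht
  convert h using 2 <;>
    first
      | rfl
      | exact Finset.filter_congr_decidable _ _ _
      | exact (Finset.filter_congr_decidable _ _ _).symm


lemma card_filter_subtype {γ : Type*} [Fintype γ] (p q : γ → Prop)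
    [DecidablePred p] [DecidablePred q] :
    #(univ.filter fun x : {y // p y} => q x.1) = #(univ.filter fun x => p x ∧ q x) := by
  refine Finset.card_bij' (i := fun x _ => x.1)
    (j := fun y hy => ⟨y, (Finset.mem_filter.1 hy).2.1⟩) ?_ ?_ ?_ ?_
  · intro x hx
    rw [mem_filter] at hx ⊢
    exact ⟨mem_univ _, x.2, hx.2⟩
  · intro y hy
    rw [mem_filter] at hy ⊢
    exact ⟨mem_univ _, hy.2.2⟩
  · intro x hx
    rfl
  · intro y hy
    rfl


end Aux

set_option maxHeartbeats 2000000

theorem stmt_10 (n k : ℕ) (hk : 1 ≤ k) (hkn : k ≤ n) :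
    (Nat.card {P : Finpartition (Finset.univ : Finset (Fin n)) //
        P.parts.card = k ∧ ∀ b ∈ P.parts, 2 ≤ b.card} : ℝ) =
      ∑ i ∈ Finset.range (k + 1),
        (-1 : ℝ) ^ i * (n.choose i) * stirlingS (n - i) (k - i) := by
  -- Step 1: rephrase the left side as a filter count with "no singleton parts"
  have e1 : Nat.card {P : Finpartition (Finset.univ : Finset (Fin n)) //
        P.parts.card = k ∧ ∀ b ∈ P.parts, 2 ≤ b.card}
      = #(univ.filter fun P : Finpartition (univ : Finset (Fin n)) =>
          #P.parts = k ∧ ∀ x : Fin n, ({x} : Finset (Fin n)) ∉ P.parts) := by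
    rw [Nat.card_eq_fintype_card, Fintype.card_subtype]
    apply congrArg
    apply Finset.filter_congr
    intro P _
    apply and_congr_right
    intro _
    constructor
    · intro h x hx
      have := h _ hx
      simp at this
    · intro h b hb
      have h1 : 1 ≤ #b := Finset.card_pos.2 (P.nonempty_of_mem_parts hb)
      have h2 : #b ≠ 1 := by
        intro hb1
        obtain ⟨x, rfl⟩ := Finset.card_eq_one.1 hb1
        exact h x hb
      omega
  -- Step 2: inclusion-exclusion over the subtype of partitions with k parts
  set p : Finpartition (univ : Finset (Fin n)) → Prop := fun P => #P.parts = k with hp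
  set S : Fin n → Finset {P // p P} :=
    fun x => univ.filter fun P => ({x} : Finset (Fin n)) ∈ P.1.parts with hSdef
  have h_compl : (univ.inf fun x : Fin n => (S x)ᶜ)
      = univ.filter fun P : {P // p P} =>
          ∀ x : Fin n, ({x} : Finset (Fin n)) ∉ P.1.parts := by
    ext P
    simp [Finset.mem_inf, hSdef]
  have htinf : ∀ t : Finset (Fin n), t.inf S
      = univ.filter fun P : {P // p P} =>
          ∀ x ∈ t, ({x} : Finset (Fin n)) ∈ P.1.parts := by
    intro t
    ext P
    simp [Finset.mem_inf, hSdef]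
  have hIE := Finset.inclusion_exclusion_card_inf_compl (univ : Finset (Fin n)) S
  rw [h_compl] at hIE
  -- identify the LHS
  have e2 : #(univ.filter fun P : {P // p P} =>
        ∀ x : Fin n, ({x} : Finset (Fin n)) ∉ P.1.parts)
      = #(univ.filter fun P : Finpartition (univ : Finset (Fin n)) =>
          #P.parts = k ∧ ∀ x : Fin n, ({x} : Finset (Fin n)) ∉ P.parts) :=
    card_filter_subtype p
      (fun P => ∀ x : Fin n, ({x} : Finset (Fin n)) ∉ P.parts)
  -- go to the reals
  have hreal : (Nat.card {P : Finpartition (Finset.univ : Finset (Fin n)) //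
        P.parts.card = k ∧ ∀ b ∈ P.parts, 2 ≤ b.card} : ℝ)
      = ∑ t ∈ (univ : Finset (Fin n)).powerset, (-1 : ℝ) ^ #t * (#(t.inf S) : ℝ) := by
    rw [e1, ← e2]
    have := congrArg (fun z : ℤ => (z : ℝ)) hIE
    push_cast at this
    convert this using 2
  rw [hreal, Finset.sum_powerset]
  -- evaluate the per-cardinality sums
  have e3 : ∀ i ∈ Finset.range (#(univ : Finset (Fin n)) + 1),
      ∑ t ∈ (univ : Finset (Fin n)).powersetCard i, (-1 : ℝ) ^ #t * (#(t.inf S) : ℝ)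
        = if i ≤ k then (-1 : ℝ) ^ i * (n.choose i) * stirlingS (n - i) (k - i) else 0 := by
    intro i hi
    have hterm : ∀ t ∈ (univ : Finset (Fin n)).powersetCard i,
        (-1 : ℝ) ^ #t * (#(t.inf S) : ℝ)
          = if i ≤ k then (-1 : ℝ) ^ i * stirlingS (n - i) (k - i) else 0 := by
      intro t ht
      have htc : #t = i := (Finset.mem_powersetCard.1 ht).2
      have hcount : #(t.inf S) = #(univ.filter
          fun P : Finpartition (univ : Finset (Fin n)) =>
            #P.parts = k ∧ ∀ x ∈ t, ({x} : Finset (Fin n)) ∈ P.parts) := by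
        rw [htinf t]
        exact card_filter_subtype p
          (fun P => ∀ x ∈ t, ({x} : Finset (Fin n)) ∈ P.parts)
      by_cases hik : i ≤ k
      · rw [if_pos hik, hcount, McountFin t k (by omega)]
        have hs : #((univ : Finset (Fin n)) \ t) = n - i := by
          rw [Finset.card_sdiff_of_subset (Finset.subset_univ t), htc, card_univ, Fintype.card_fin]
        rw [htc]
        rw [npart_eq, hs]
      · rw [if_neg hik, hcount, MzeroFin t k (by omega)]
        rw [htc]
        simp
    rw [Finset.sum_congr rfl hterm, Finset.sum_const, Finset.card_powersetCard, card_univ,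
      Fintype.card_fin]
    by_cases hik : i ≤ k
    · rw [if_pos hik, if_pos hik]
      simp only [nsmul_eq_mul]
      ring
    · rw [if_neg hik, if_neg hik]
      simp
  rw [Finset.sum_congr rfl e3, card_univ, Fintype.card_fin]
  rw [← Finset.sum_subset (Finset.range_subset_range.2 (by omega : k + 1 ≤ n + 1))
    (fun i hi hik => by
      rw [Finset.mem_range] at hi
      rw [Finset.mem_range, not_lt] at hik
      rw [if_neg (by omega)])]
  refine Finset.sum_congr rfl fun i hi => ?_
  rw [Finset.mem_range] at hi
  rw [if_pos (by omega)]
end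

section
/- For every positive integer n and every real x with |x| < 2π, the n-th derivative of x/(eˣ − 1), evaluated as x → 0, equals ∑_{k=1}^{n} (-1)^k · k! · B_{n,k}(1/2, 1/3, …, 1/(n-k+2)), i.e., this expression equals the n-th Bernoulli number Bₙ. -/
open Finset

open PowerSeries

noncomputable def Gser : PowerSeries ℝ := PowerSeries.mk fun i => (((i+1).factorial : ℝ))⁻¹
noncomputable def Qser : PowerSeries ℝ := PowerSeries.mk fun i => if i = 0 then 0 else (((i+1).factorial : ℝ))⁻¹

lemma Gser_eq : Gser = 1 + Qser := by
  ext n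
  cases n <;> simp [Gser, Qser, coeff_mk, PowerSeries.coeff_one]

lemma X_mul_Gser : (X : PowerSeries ℝ) * Gser = PowerSeries.exp ℝ - 1 := by
  ext n
  cases n with
  | zero => simp [Gser, PowerSeries.coeff_exp]
  | succ m =>
    simp [coeff_succ_X_mul, Gser, PowerSeries.coeff_exp, PowerSeries.coeff_one, coeff_mk,
      Nat.succ_ne_zero]

lemma bern_mul_Gser : bernoulliPowerSeries ℝ * Gser = 1 := by
  have h := bernoulliPowerSeries_mul_exp_sub_one ℝ
  rw [← X_mul_Gser] at h
  have h2 : (X : PowerSeries ℝ) * (bernoulliPowerSeries ℝ * Gser) = X * 1 := by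
    linear_combination h
  exact mul_left_cancel₀ PowerSeries.X_ne_zero h2

lemma X_dvd_Qser : (X : PowerSeries ℝ) ∣ Qser := by
  rw [PowerSeries.X_dvd_iff]; simp [Qser, ← coeff_zero_eq_constantCoeff_apply, coeff_mk]

lemma coeff_geom (n : ℕ) (hn : 1 ≤ n) :
    coeff n (∑ k ∈ range (n+1), (-Qser)^k) = (bernoulli n : ℝ) / (n.factorial : ℝ) := by
  set S := ∑ k ∈ range (n+1), (-Qser)^k with hS
  have hgeom : S * (Qser + 1) = 1 - (-Qser)^(n+1) := by
    have := geom_sum_mul (-Qser) (n+1)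
    have h2 : S * (-Qser - 1) = (-Qser)^(n+1) - 1 := this
    have h3 : -(S * (-Qser - 1)) = -((-Qser)^(n+1) - 1) := by rw [h2]
    calc S * (Qser + 1) = -(S * (-Qser - 1)) := by ring
    _ = 1 - (-Qser)^(n+1) := by rw [h2]; ring
  have hBG : bernoulliPowerSeries ℝ * (Qser + 1) = 1 := by
    rw [add_comm Qser 1, ← Gser_eq]; exact bern_mul_Gser
  have hdvd : (X : PowerSeries ℝ)^(n+1) ∣ (S - bernoulliPowerSeries ℝ) * (Qser + 1) := by
    have : (S - bernoulliPowerSeries ℝ) * (Qser + 1) = -((-Qser)^(n+1)) := by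
      rw [sub_mul, hgeom, hBG]; ring
    rw [this]
    exact (dvd_neg).2 (pow_dvd_pow_of_dvd ((dvd_neg).2 X_dvd_Qser) _)
  have hunit : IsUnit (Qser + 1) := by
    rw [PowerSeries.isUnit_iff_constantCoeff, map_add, map_one]
    have : constantCoeff Qser = 0 := by
      rw [← coeff_zero_eq_constantCoeff_apply]; simp [Qser, coeff_mk]
    rw [this, zero_add]; exact isUnit_one
  obtain ⟨u, hu⟩ := hunit
  have hdvd2 : (X : PowerSeries ℝ)^(n+1) ∣ (S - bernoulliPowerSeries ℝ) := by
    rw [← hu] at hdvd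
    exact Units.dvd_mul_right.mp hdvd
  have hc : coeff n (S - bernoulliPowerSeries ℝ) = 0 :=
    (PowerSeries.X_pow_dvd_iff.1 hdvd2) n (Nat.lt_succ_self n)
  have hcc : coeff n S - coeff n (bernoulliPowerSeries ℝ) = 0 := by
    rw [← map_sub]; exact hc
  have : coeff n S = coeff n (bernoulliPowerSeries ℝ) := sub_eq_zero.mp hcc
  rw [this, bernoulliPowerSeries, coeff_mk]
  push_cast
  simp [div_eq_mul_inv]

noncomputable def Rser (n : ℕ) : PowerSeries ℝ :=
  ∑ i ∈ Icc 1 n, PowerSeries.C (((i+1).factorial : ℝ))⁻¹ * X ^ i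

lemma coeff_Qpow_eq (n k : ℕ) : coeff n (Qser ^ k) = coeff n ((Rser n) ^ k) := by
  have hdvd : (X : PowerSeries ℝ)^(n+1) ∣ Qser - Rser n := by
    rw [PowerSeries.X_pow_dvd_iff]
    intro m hm
    rw [map_sub]
    have hR : coeff m (Rser n) = if m = 0 then 0 else (((m+1).factorial : ℝ))⁻¹ := by
      rw [Rser, map_sum]
      simp only [coeff_C_mul, coeff_X_pow, mul_ite, mul_one, mul_zero]
      rw [Finset.sum_ite_eq (Icc 1 n) m (fun i => (((i+1).factorial : ℝ))⁻¹)]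
      rcases Nat.eq_zero_or_pos m with h0 | h1
      · simp [h0]
      · have : m ∈ Icc 1 n := mem_Icc.mpr ⟨h1, Nat.lt_succ_iff.mp hm⟩
        simp [this, Nat.pos_iff_ne_zero.mp h1]
    rw [hR, Qser, coeff_mk, sub_self]
  have h2 : (X : PowerSeries ℝ)^(n+1) ∣ Qser ^ k - (Rser n) ^ k :=
    dvd_trans hdvd (sub_dvd_pow_sub_pow _ _ k)
  have := (PowerSeries.X_pow_dvd_iff.1 h2) n (Nat.lt_succ_self n)
  rw [map_sub] at this
  linarith [this]

lemma coeff_Rpow (n k : ℕ) : coeff n ((Rser n) ^ k) =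
    ∑ d ∈ piAntidiag (Icc 1 n) k,
      if (∑ i ∈ Icc 1 n, i * d i) = n then
        (Nat.multinomial (Icc 1 n) d : ℝ) * ∏ i ∈ Icc 1 n, ((((i+1).factorial : ℝ))⁻¹) ^ d i
      else 0 := by
  rw [Rser, Finset.sum_pow_eq_sum_piAntidiag, map_sum]
  refine Finset.sum_congr rfl fun d _ => ?_
  have hprod : ∏ i ∈ Icc 1 n, (PowerSeries.C (((i+1).factorial : ℝ))⁻¹ * X ^ i) ^ d i
      = PowerSeries.C (∏ i ∈ Icc 1 n, ((((i+1).factorial : ℝ))⁻¹) ^ d i)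
        * X ^ (∑ i ∈ Icc 1 n, i * d i) := by
    rw [map_prod, ← Finset.prod_pow_eq_pow_sum, ← Finset.prod_mul_distrib]
    refine Finset.prod_congr rfl fun i _ => ?_
    rw [mul_pow, map_pow, ← pow_mul]
  rw [hprod, ← mul_assoc]
  rw [show ((Nat.multinomial (Icc 1 n) d : PowerSeries ℝ)) = PowerSeries.C ((Nat.multinomial (Icc 1 n) d : ℝ)) by
    rw [← map_natCast PowerSeries.C], ← map_mul, PowerSeries.coeff_C_mul, PowerSeries.coeff_X_pow]
  by_cases h : (∑ i ∈ Icc 1 n, i * d i) = n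
  · simp [h, eq_comm]
  · simp only [h, if_false, mul_ite, mul_one, mul_zero, ite_eq_right_iff]
    intro hc; exact absurd hc.symm h

lemma bell_eq (n k : ℕ) (hk1 : 1 ≤ k) (hkn : k ≤ n) :
    (k.factorial : ℝ) * bellB n k (fun i => 1 / ((i : ℝ) + 1)) =
      (n.factorial : ℝ) * ∑ d ∈ piAntidiag (Icc 1 n) k,
      (if (∑ i ∈ Icc 1 n, i * d i) = n then
        (Nat.multinomial (Icc 1 n) d : ℝ) * ∏ i ∈ Icc 1 n, ((((i+1).factorial : ℝ))⁻¹) ^ d i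
      else 0) := by
  rw [bellB, Finset.mul_sum, Finset.mul_sum]
  simp only [mul_ite, mul_zero]
  rw [← Finset.sum_filter, ← Finset.sum_filter]
  have hIccR : Icc 1 n ⊆ range (n+1) := by
    intro m hm; rw [mem_range, Nat.lt_succ_iff]; exact (mem_Icc.mp hm).2
  set iF : (Fin (n+1) → Fin (n+1)) → (ℕ → ℕ) :=
    fun ℓ m => if h : m < n + 1 then (ℓ ⟨m, h⟩ : ℕ) else 0 with hiF
  set jF : (ℕ → ℕ) → (Fin (n+1) → Fin (n+1)) :=
    fun d i => (open Fin.NatCast in ((d (i : ℕ) : ℕ) : Fin (n+1))) with hjF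
  have hval : ∀ ℓ (i : Fin (n+1)), iF ℓ (i : ℕ) = (ℓ i : ℕ) := by
    intro ℓ i; simp [hiF, i.isLt, Nat.not_lt.mpr i.is_le]
  -- sums over Fin equal sums over Icc 1 n of the transported function
  have hsum0 : ∀ (ℓ : Fin (n+1) → Fin (n+1)) (f : ℕ → ℕ → ℕ),
      (∀ m, f m 0 = 0) → iF ℓ 0 = 0 →
      (∑ i : Fin (n+1), f (i : ℕ) (ℓ i : ℕ)) = ∑ m ∈ Icc 1 n, f m (iF ℓ m) := by
    intro ℓ f hf h0
    have : (∑ i : Fin (n+1), f (i : ℕ) (ℓ i : ℕ))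
        = ∑ m ∈ range (n+1), f m (iF ℓ m) := by
      rw [← Fin.sum_univ_eq_sum_range (fun m => f m (iF ℓ m)) (n+1)]
      exact Finset.sum_congr rfl fun i _ => by rw [hval]
    rw [this]
    refine (Finset.sum_subset hIccR fun m hm hnot => ?_).symm
    have hm' : m ≤ n := Nat.lt_succ_iff.mp (mem_range.mp hm)
    have : m = 0 := by
      by_contra h
      exact hnot (mem_Icc.mpr ⟨Nat.one_le_iff_ne_zero.mpr h, hm'⟩)
    subst this; rw [h0]; exact hf 0
  refine Finset.sum_nbij' iF jF ?_ ?_ ?_ ?_ ?_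
  · -- maps into
    intro ℓ hℓ
    rw [mem_filter] at hℓ
    obtain ⟨-, h0, hsn, hsk⟩ := hℓ
    have h00 : iF ℓ 0 = 0 := by rw [show (0:ℕ) = ((0 : Fin (n+1)) : ℕ) by simp, hval]; exact h0
    rw [mem_filter, mem_piAntidiag]
    refine ⟨⟨?_, ?_⟩, ?_⟩
    · rw [← hsum0 ℓ (fun m v => v) (fun _ => rfl) h00]; exact hsk
    · intro m hm
      by_cases h : m < n + 1
      · rcases Nat.eq_zero_or_pos m with rfl | h1
        · exact absurd h00 hm
        · exact mem_Icc.mpr ⟨h1, Nat.lt_succ_iff.mp h⟩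
      · exact absurd (dif_neg h) hm
    · rw [← hsum0 ℓ (fun m v => m * v) (fun m => mul_zero m) h00]; exact hsn
  · -- reverse map into
    intro d hd
    rw [mem_filter, mem_piAntidiag] at hd
    obtain ⟨⟨hsk, hsupp⟩, hsn⟩ := hd
    have hdle : ∀ m, d m ≤ n := by
      intro m
      by_cases hm : m ∈ Icc 1 n
      · calc d m ≤ ∑ i ∈ Icc 1 n, d i :=
            Finset.single_le_sum (fun i _ => Nat.zero_le _) hm
        _ = k := hsk
        _ ≤ n := hkn
      · rcases Nat.eq_zero_or_pos (d m) with h | h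
        · omega
        · exact absurd (hsupp m (Nat.pos_iff_ne_zero.mp h)) hm
    have hjval : ∀ i : Fin (n+1), ((jF d i : Fin (n+1)) : ℕ) = d (i : ℕ) := by
      intro i
      simp only [hjF]
      exact Fin.val_cast_of_lt (Nat.lt_succ_of_le (hdle _))
    have hiFj : iF (jF d) = d := by
      funext m
      by_cases hm : m < n + 1
      · rw [show iF (jF d) m = ((jF d ⟨m, hm⟩ : Fin (n+1)) : ℕ) from dif_pos hm, hjval ⟨m, hm⟩]
      · rw [hiF]
        simp only [dif_neg hm]
        rcases Nat.eq_zero_or_pos (d m) with h | h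
        · omega
        · have := hsupp m (Nat.pos_iff_ne_zero.mp h)
          rw [mem_Icc] at this; omega
    have h00 : iF (jF d) 0 = 0 := by
      rw [hiFj]
      rcases Nat.eq_zero_or_pos (d 0) with h | h
      · exact h
      · have := hsupp 0 (Nat.pos_iff_ne_zero.mp h); rw [mem_Icc] at this; omega
    rw [mem_filter]
    refine ⟨mem_univ _, ?_, ?_, ?_⟩
    · rw [← hval (jF d) 0]
      simpa using h00
    · rw [hsum0 (jF d) (fun m v => m * v) (fun m => mul_zero m) h00, hiFj]
      exact hsn
    · rw [hsum0 (jF d) (fun m v => v) (fun _ => rfl) h00, hiFj]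
      exact hsk
  · -- left inverse
    intro ℓ hℓ
    funext i
    rw [hjF]
    simp only
    rw [hval ℓ i]
    exact Fin.cast_val_eq_self (ℓ i)
  · -- right inverse
    intro d hd
    rw [mem_filter, mem_piAntidiag] at hd
    obtain ⟨⟨hsk, hsupp⟩, hsn⟩ := hd
    have hdle : ∀ m, d m ≤ n := by
      intro m
      by_cases hm : m ∈ Icc 1 n
      · calc d m ≤ ∑ i ∈ Icc 1 n, d i :=
            Finset.single_le_sum (fun i _ => Nat.zero_le _) hm
        _ = k := hsk
        _ ≤ n := hkn
      · rcases Nat.eq_zero_or_pos (d m) with h | h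
        · omega
        · exact absurd (hsupp m (Nat.pos_iff_ne_zero.mp h)) hm
    funext m
    by_cases hm : m < n + 1
    · rw [show iF (jF d) m = ((jF d ⟨m, hm⟩ : Fin (n+1)) : ℕ) from dif_pos hm]
      simp only [hjF]
      exact Fin.val_cast_of_lt (Nat.lt_succ_of_le (hdle m))
    · rw [hiF]
      simp only [dif_neg hm]
      rcases Nat.eq_zero_or_pos (d m) with h | h
      · omega
      · have := hsupp m (Nat.pos_iff_ne_zero.mp h)
        rw [mem_Icc] at this; omega
  · -- term equality
    intro ℓ hℓ
    rw [mem_filter] at hℓ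
    obtain ⟨-, h0, hsn, hsk⟩ := hℓ
    have h00 : iF ℓ 0 = 0 := by
      rw [show (0:ℕ) = ((0 : Fin (n+1)) : ℕ) by simp, hval]; exact h0
    -- transported sums
    have hk' : ∑ m ∈ Icc 1 n, iF ℓ m = k := by
      rw [← hsum0 ℓ (fun m v => v) (fun _ => rfl) h00]; exact hsk
    -- product conversions
    have hprod : ∀ (f : ℕ → ℕ → ℝ), (∀ m, f m 0 = 1) →
        (∏ i : Fin (n+1), f (i : ℕ) (ℓ i : ℕ)) = ∏ m ∈ Icc 1 n, f m (iF ℓ m) := by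
      intro f hf
      have : (∏ i : Fin (n+1), f (i : ℕ) (ℓ i : ℕ))
          = ∏ m ∈ range (n+1), f m (iF ℓ m) := by
        rw [← Fin.prod_univ_eq_prod_range (fun m => f m (iF ℓ m)) (n+1)]
        exact Finset.prod_congr rfl fun i _ => by rw [hval]
      rw [this]
      refine (Finset.prod_subset hIccR fun m hm hnot => ?_).symm
      have hm' : m ≤ n := Nat.lt_succ_iff.mp (mem_range.mp hm)
      have : m = 0 := by
        by_contra h
        exact hnot (mem_Icc.mpr ⟨Nat.one_le_iff_ne_zero.mpr h, hm'⟩)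
      subst this; rw [h00]; exact hf 0
    rw [hprod (fun m v => (v.factorial : ℝ)) (fun m => by norm_num)]
    rw [hprod (fun m v => ((1 / ((m : ℝ) + 1)) / (m.factorial : ℝ)) ^ v) (fun m => by norm_num)]
    have hfrac : ∀ m : ℕ, (1 / ((m : ℝ) + 1)) / (m.factorial : ℝ) = (((m+1).factorial : ℝ))⁻¹ := by
      intro m
      rw [Nat.factorial_succ]
      push_cast
      rw [mul_inv, div_eq_mul_inv, one_div]
    have hprodeq : (∏ m ∈ Icc 1 n, ((1 / ((m : ℝ) + 1)) / (m.factorial : ℝ)) ^ iF ℓ m)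
        = ∏ m ∈ Icc 1 n, ((((m+1).factorial : ℝ))⁻¹) ^ iF ℓ m :=
      Finset.prod_congr rfl fun m _ => by rw [hfrac m]
    rw [hprodeq]
    -- multinomial
    have hms := Nat.multinomial_spec (Icc 1 n) (iF ℓ)
    rw [hk'] at hms
    have hPne : (∏ m ∈ Icc 1 n, ((iF ℓ m).factorial : ℝ)) ≠ 0 :=
      Finset.prod_ne_zero_iff.mpr fun m _ => Nat.cast_ne_zero.mpr (Nat.factorial_ne_zero _)
    have hmult : ((Nat.multinomial (Icc 1 n) (iF ℓ)) : ℝ)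
        = (k.factorial : ℝ) / ∏ m ∈ Icc 1 n, ((iF ℓ m).factorial : ℝ) := by
      rw [eq_div_iff hPne, mul_comm]
      exact_mod_cast congrArg (Nat.cast : ℕ → ℝ) hms
    rw [hmult]
    field_simp

lemma bell_coeff (n k : ℕ) (hk1 : 1 ≤ k) (hkn : k ≤ n) :
    (k.factorial : ℝ) * bellB n k (fun i => 1 / ((i : ℝ) + 1)) =
      (n.factorial : ℝ) * PowerSeries.coeff n (Qser ^ k) := by
  rw [coeff_Qpow_eq, coeff_Rpow]
  exact bell_eq n k hk1 hkn

lemma part2 (n : ℕ) (hn : 1 ≤ n) :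
    (∑ k ∈ Finset.Icc 1 n,
        (-1 : ℝ) ^ k * (k.factorial : ℝ) * bellB n k (fun i => 1 / ((i : ℝ) + 1))) =
      (bernoulli n : ℝ) := by
  have hnfac : (n.factorial : ℝ) ≠ 0 := Nat.cast_ne_zero.mpr (Nat.factorial_ne_zero _)
  have h1 : ∀ k ∈ Icc 1 n, (-1 : ℝ) ^ k * (k.factorial : ℝ) * bellB n k (fun i => 1 / ((i : ℝ) + 1))
      = (n.factorial : ℝ) * PowerSeries.coeff n ((-Qser) ^ k) := by
    intro k hk
    rw [mem_Icc] at hk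
    have hneg : PowerSeries.coeff n ((-Qser) ^ k)
        = (-1 : ℝ) ^ k * PowerSeries.coeff n (Qser ^ k) := by
      have : (-Qser) ^ k = PowerSeries.C ((-1 : ℝ) ^ k) * Qser ^ k := by
        rw [neg_pow, map_pow, map_neg, map_one]
      rw [this, PowerSeries.coeff_C_mul]
    rw [hneg, mul_assoc, bell_coeff n k hk.1 hk.2]
    ring
  rw [Finset.sum_congr rfl h1, ← Finset.mul_sum]
  have h2 : ∑ k ∈ Icc 1 n, PowerSeries.coeff n ((-Qser) ^ k)
      = ∑ k ∈ range (n+1), PowerSeries.coeff n ((-Qser) ^ k) := by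
    refine Finset.sum_subset (fun m hm => ?_) (fun k hk hnk => ?_)
    · rw [mem_range, Nat.lt_succ_iff]; exact (mem_Icc.mp hm).2
    · have hk' : k ≤ n := Nat.lt_succ_iff.mp (mem_range.mp hk)
      have : k = 0 := by
        by_contra h
        exact hnk (mem_Icc.mpr ⟨Nat.one_le_iff_ne_zero.mpr h, hk'⟩)
      subst this
      rw [pow_zero, PowerSeries.coeff_one, if_neg (by omega)]
  rw [h2, ← map_sum, coeff_geom n hn]
  field_simp

noncomputable def hfun : ℝ → ℝ := fun x => if x = 0 then 1 else (Real.exp x - 1) / x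

noncomputable def qser : FormalMultilinearSeries ℝ ℝ ℝ :=
  FormalMultilinearSeries.ofScalars ℝ fun n => (((n+1).factorial : ℝ))⁻¹

lemma hasSum_hfun (y : ℝ) : HasSum (fun n => (((n+1).factorial : ℝ))⁻¹ * y ^ n) (hfun y) := by
  by_cases hy : y = 0
  · subst hy
    have : (fun n => (((n+1).factorial : ℝ))⁻¹ * (0:ℝ) ^ n)
        = fun n => if n = 0 then (1:ℝ) else 0 := by
      funext n; cases n <;> simp
    rw [this, hfun]
    simpa using hasSum_ite_eq 0 (1:ℝ)
  · have hexp : HasSum (fun n => y ^ n / (n.factorial : ℝ)) (Real.exp y) := by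
      rw [Real.exp_eq_exp_ℝ]
      exact NormedSpace.expSeries_div_hasSum_exp y
    have h1 : HasSum (fun n => y ^ (n+1) / ((n+1).factorial : ℝ)) (Real.exp y - 1) := by
      have := (hasSum_nat_add_iff' (f := fun n => y ^ n / (n.factorial : ℝ)) 1).2 hexp
      simpa using this
    have h2 := h1.mul_left y⁻¹
    have : (fun n => y⁻¹ * (y ^ (n+1) / ((n+1).factorial : ℝ)))
        = fun n => (((n+1).factorial : ℝ))⁻¹ * y ^ n := by
      funext n
      rw [pow_succ]
      field_simp
    rw [this] at h2
    have : hfun y = y⁻¹ * (Real.exp y - 1) := by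
      rw [hfun]; simp [hy, div_eq_inv_mul]
    rw [this]
    exact h2

lemma hfun_hasFPower : HasFPowerSeriesOnBall hfun qser 0 1 := by
  refine ⟨?_, one_pos, ?_⟩
  · refine FormalMultilinearSeries.le_radius_of_bound qser 1 fun n => ?_
    have h1 : ‖qser n‖ = (((n+1).factorial : ℝ))⁻¹ := by
      rw [qser, FormalMultilinearSeries.ofScalars_norm, Real.norm_eq_abs, abs_inv, Nat.abs_cast]
    have h2 : (1:ℝ) ≤ ((n+1).factorial : ℝ) := by
      exact_mod_cast Nat.one_le_iff_ne_zero.mpr (Nat.factorial_ne_zero _)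
    have h3 : (((n+1).factorial : ℝ))⁻¹ ≤ 1 := by
      rw [inv_le_one_iff₀]; right; exact h2
    rw [h1, NNReal.coe_one, one_pow, mul_one]
    exact h3
  · intro y hy
    simp only [zero_add]
    have := hasSum_hfun y
    have happ : ∀ n, qser n (fun _ => y) = (((n+1).factorial : ℝ))⁻¹ * y ^ n := by
      intro n
      rw [qser, FormalMultilinearSeries.ofScalars_apply_eq, smul_eq_mul]
    rw [show (fun n => qser n (fun _ => y)) = fun n => (((n+1).factorial : ℝ))⁻¹ * y ^ n from funext happ]
    exact this

lemma exp_sub_one_ne_zero {x : ℝ} (hx : x ≠ 0) : Real.exp x - 1 ≠ 0 := by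
  rw [sub_ne_zero]
  exact fun h => hx (Real.exp_injective (h.trans Real.exp_zero.symm))

lemma hfun_ne_zero (x : ℝ) : hfun x ≠ 0 := by
  rw [hfun]
  by_cases hx : x = 0
  · simp [hx]
  · simp only [hx, if_false]
    exact div_ne_zero (exp_sub_one_ne_zero hx) hx

lemma hfun_contDiff : ContDiff ℝ (⊤ : ℕ∞) hfun := by
  rw [contDiff_iff_contDiffAt]
  intro x
  by_cases hx : x = 0
  · subst hx
    exact hfun_hasFPower.analyticAt.contDiffAt
  · have h1 : ContDiffAt ℝ (⊤ : ℕ∞) (fun y : ℝ => (Real.exp y - 1) / y) x := by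
      exact ((Real.contDiff_exp.sub contDiff_const).contDiffAt).div contDiffAt_id hx
    refine h1.congr_of_eventuallyEq ?_
    have hev : ∀ᶠ y in nhds x, y ≠ 0 := eventually_ne_nhds hx
    filter_upwards [hev] with y hy
    rw [hfun, if_neg hy]

lemma Ffun_eq : (fun x : ℝ => if x = 0 then 1 else x / (Real.exp x - 1)) = fun x => (hfun x)⁻¹ := by
  funext x
  by_cases hx : x = 0
  · simp [hx, hfun]
  · rw [hfun]
    simp only [hx, if_false]
    rw [inv_div]

lemma Ffun_contDiff : ContDiff ℝ (⊤ : ℕ∞) (fun x => (hfun x)⁻¹) :=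
  hfun_contDiff.inv hfun_ne_zero

lemma iteratedDeriv_hfun_zero (j : ℕ) : iteratedDeriv j hfun 0 = ((j : ℝ) + 1)⁻¹ := by
  have h := hfun_hasFPower.factorial_smul (y := (1:ℝ)) j
  rw [← iteratedDeriv_eq_iteratedFDeriv] at h
  have happ : qser j (fun _ => (1:ℝ)) = (((j+1).factorial : ℝ))⁻¹ := by
    rw [qser, FormalMultilinearSeries.ofScalars_apply_eq, smul_eq_mul, one_pow, mul_one]
  rw [happ, nsmul_eq_mul] at h
  rw [← h, Nat.factorial_succ]
  push_cast
  rw [mul_inv]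
  have : (j.factorial : ℝ) ≠ 0 := Nat.cast_ne_zero.mpr (Nat.factorial_ne_zero _)
  field_simp

lemma iteratedDeriv_mul' {f g : ℝ → ℝ} (hf : ContDiff ℝ (⊤ : ℕ∞) f)
    (hg : ContDiff ℝ (⊤ : ℕ∞) g) (n : ℕ) :
    iteratedDeriv n (fun y => f y * g y) = fun x =>
      ∑ k ∈ range (n+1), (n.choose k : ℝ) * iteratedDeriv k f x * iteratedDeriv (n-k) g x := by
  have hdf : ∀ m, Differentiable ℝ (iteratedDeriv m f) := fun m =>
    hf.differentiable_iteratedDeriv m (by norm_cast; exact lt_top_iff_ne_top.mpr (by simp))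
  have hdg : ∀ m, Differentiable ℝ (iteratedDeriv m g) := fun m =>
    hg.differentiable_iteratedDeriv m (by norm_cast; exact lt_top_iff_ne_top.mpr (by simp))
  induction n with
  | zero => simp
  | succ n ih =>
    rw [iteratedDeriv_succ, ih]
    funext x
    have hterm : ∀ k, DifferentiableAt ℝ
        (fun y => (n.choose k : ℝ) * iteratedDeriv k f y * iteratedDeriv (n-k) g y) x := by
      intro k
      exact (((hdf k).differentiableAt.const_mul _).mul (hdg (n-k)).differentiableAt)
    rw [deriv_fun_sum (fun k _ => hterm k)]
    have hder : ∀ k, deriv (fun y => (n.choose k : ℝ) * iteratedDeriv k f y * iteratedDeriv (n-k) g y) x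
        = (n.choose k : ℝ) * (iteratedDeriv (k+1) f x * iteratedDeriv (n-k) g x
            + iteratedDeriv k f x * iteratedDeriv (n-k+1) g x) := by
      intro k
      rw [deriv_fun_mul ((hdf k).differentiableAt.const_mul _) (hdg (n-k)).differentiableAt,
        deriv_const_mul _ (hdf k).differentiableAt, ← iteratedDeriv_succ, ← iteratedDeriv_succ]
      ring
    rw [Finset.sum_congr rfl (fun k _ => hder k)]
    -- now pure algebra on sums
    have expand : ∑ k ∈ range (n+1), (n.choose k : ℝ) *
          (iteratedDeriv (k+1) f x * iteratedDeriv (n-k) g x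
            + iteratedDeriv k f x * iteratedDeriv (n-k+1) g x)
        = (∑ k ∈ range (n+1), (n.choose k : ℝ) * iteratedDeriv (k+1) f x * iteratedDeriv (n-k) g x)
          + ∑ k ∈ range (n+1), (n.choose k : ℝ) * iteratedDeriv k f x * iteratedDeriv (n+1-k) g x := by
      rw [← Finset.sum_add_distrib]
      refine Finset.sum_congr rfl fun k hk => ?_
      have hk' : k ≤ n := Nat.lt_succ_iff.mp (mem_range.mp hk)
      have : n + 1 - k = (n - k) + 1 := by omega
      rw [this]
      ring
    rw [expand]
    -- target
    rw [Finset.sum_range_succ' (fun k => ((n+1).choose k : ℝ) * iteratedDeriv k f x * iteratedDeriv (n+1-k) g x) (n+1)]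
    have hB : ∑ k ∈ range (n+1), (n.choose k : ℝ) * iteratedDeriv k f x * iteratedDeriv (n+1-k) g x
        = (∑ k ∈ range n, (n.choose (k+1) : ℝ) * iteratedDeriv (k+1) f x * iteratedDeriv (n-k) g x)
          + (n.choose 0 : ℝ) * iteratedDeriv 0 f x * iteratedDeriv (n+1) g x := by
      rw [Finset.sum_range_succ' (fun k => (n.choose k : ℝ) * iteratedDeriv k f x * iteratedDeriv (n+1-k) g x) n]
      congr 1
      refine Finset.sum_congr rfl fun k hk => ?_
      have : n + 1 - (k+1) = n - k := by omega
      rw [this]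
    have hA2 : ∑ k ∈ range (n+1), (n.choose (k+1) : ℝ) * iteratedDeriv (k+1) f x * iteratedDeriv (n-k) g x
        = ∑ k ∈ range n, (n.choose (k+1) : ℝ) * iteratedDeriv (k+1) f x * iteratedDeriv (n-k) g x := by
      rw [Finset.sum_range_succ]
      simp [Nat.choose_succ_self]
    rw [hB]
    have hsplit : ∑ k ∈ range (n+1),
          ((n+1).choose (k+1) : ℝ) * iteratedDeriv (k+1) f x * iteratedDeriv (n+1-(k+1)) g x
        = (∑ k ∈ range (n+1), (n.choose k : ℝ) * iteratedDeriv (k+1) f x * iteratedDeriv (n-k) g x)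
          + ∑ k ∈ range (n+1), (n.choose (k+1) : ℝ) * iteratedDeriv (k+1) f x * iteratedDeriv (n-k) g x := by
      rw [← Finset.sum_add_distrib]
      refine Finset.sum_congr rfl fun k hk => ?_
      rw [Nat.succ_sub_succ, Nat.choose_succ_succ]
      push_cast
      ring
    rw [hsplit, hA2]
    simp only [Nat.choose_zero_right, Nat.cast_one, one_mul, iteratedDeriv_zero, Nat.sub_zero]
    ring

lemma iteratedDeriv_one_fun {n : ℕ} (hn : n ≠ 0) (x : ℝ) :
    iteratedDeriv n (fun _ : ℝ => (1:ℝ)) x = 0 := by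
  rw [iteratedDeriv_eq_iteratedFDeriv, iteratedFDeriv_const_of_ne hn]
  rfl

lemma Frec (n : ℕ) (hn : 1 ≤ n) :
    ∑ k ∈ range (n+1), (n.choose k : ℝ) * iteratedDeriv k (fun x => (hfun x)⁻¹) 0
      * (((n-k : ℕ) : ℝ) + 1)⁻¹ = 0 := by
  have hmul : (fun y : ℝ => (hfun y)⁻¹ * hfun y) = fun _ : ℝ => (1:ℝ) := by
    funext y; exact inv_mul_cancel₀ (hfun_ne_zero y)
  have h := iteratedDeriv_mul' Ffun_contDiff hfun_contDiff n
  rw [hmul] at h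
  have h0 := congrFun h 0
  rw [iteratedDeriv_one_fun (by omega)] at h0
  have h1 : ∑ k ∈ range (n+1), (n.choose k : ℝ) * iteratedDeriv k (fun x => (hfun x)⁻¹) 0
      * iteratedDeriv (n-k) hfun 0
      = ∑ k ∈ range (n+1), (n.choose k : ℝ) * iteratedDeriv k (fun x => (hfun x)⁻¹) 0
      * (((n-k : ℕ) : ℝ) + 1)⁻¹ :=
    Finset.sum_congr rfl fun k _ => by rw [iteratedDeriv_hfun_zero]
  rw [← h1]
  exact h0.symm

lemma Brec (n : ℕ) (hn : 1 ≤ n) :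
    ∑ k ∈ range (n+1), (n.choose k : ℝ) * (bernoulli k : ℝ)
      * (((n-k : ℕ) : ℝ) + 1)⁻¹ = 0 := by
  have hq : ∑ k ∈ range (n+1), ((n+1).choose k : ℚ) * bernoulli k = 0 := by
    have := sum_bernoulli (n+1)
    rwa [if_neg (by omega)] at this
  have hr : ∑ k ∈ range (n+1), ((n+1).choose k : ℝ) * (bernoulli k : ℝ) = 0 := by
    have := congrArg (fun q : ℚ => (q : ℝ)) hq
    push_cast at this
    simpa using this
  have key : ∀ k ∈ range (n+1), (n.choose k : ℝ) * (bernoulli k : ℝ) * (((n-k : ℕ) : ℝ) + 1)⁻¹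
      = ((n+1:ℝ))⁻¹ * (((n+1).choose k : ℝ) * (bernoulli k : ℝ)) := by
    intro k hk
    have hk' : k ≤ n := Nat.lt_succ_iff.mp (mem_range.mp hk)
    have hc : (n.choose k : ℝ) * ((n:ℝ)+1) = ((n+1).choose k : ℝ) * (((n-k : ℕ) : ℝ) + 1) := by
      have := Nat.choose_mul_succ_eq n k
      have h2 : n + 1 - k = (n - k) + 1 := by omega
      rw [h2] at this
      exact_mod_cast this
    have hne1 : ((n:ℝ)+1) ≠ 0 := by positivity
    have hne2 : (((n-k : ℕ) : ℝ) + 1) ≠ 0 := by positivity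
    have h3gen : ∀ d : ℝ, d ≠ 0 → (n.choose k : ℝ) * ((n:ℝ)+1) = ((n+1).choose k : ℝ) * d →
        (n.choose k : ℝ) * d⁻¹ = ((n:ℝ)+1)⁻¹ * ((n+1).choose k : ℝ) := by
      intro d hd hcd
      field_simp
      linear_combination hcd
    have h3 := h3gen _ hne2 hc
    linear_combination (bernoulli k : ℝ) * h3
  rw [Finset.sum_congr rfl key, ← Finset.mul_sum]
  rw [hr, mul_zero]

lemma iteratedDeriv_F_eq_bernoulli (n : ℕ) :
    iteratedDeriv n (fun x => (hfun x)⁻¹) 0 = (bernoulli n : ℝ) := by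
  induction n using Nat.strong_induction_on with
  | _ n ih =>
    rcases Nat.eq_zero_or_pos n with rfl | hn
    · simp [hfun, bernoulli]
    · have hF := Frec n hn
      have hB := Brec n hn
      rw [Finset.sum_range_succ] at hF hB
      simp only [Nat.choose_self, Nat.cast_one, Nat.sub_self, Nat.cast_zero, one_mul,
        zero_add, inv_one, mul_one] at hF hB
      have hsum : ∑ k ∈ range n, (n.choose k : ℝ) * iteratedDeriv k (fun x => (hfun x)⁻¹) 0
          * (((n-k : ℕ) : ℝ) + 1)⁻¹
          = ∑ k ∈ range n, (n.choose k : ℝ) * (bernoulli k : ℝ) * (((n-k : ℕ) : ℝ) + 1)⁻¹ :=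
        Finset.sum_congr rfl fun k hk => by rw [ih k (mem_range.mp hk)]
      linarith [hF, hB, hsum]

theorem stmt_11 (n : ℕ) (hn : 1 ≤ n) :
    Filter.Tendsto
        (iteratedDeriv n (fun x : ℝ => if x = 0 then 1 else x / (Real.exp x - 1)))
        (nhdsWithin 0 {(0 : ℝ)}ᶜ)
        (nhds (∑ k ∈ Finset.Icc 1 n,
          (-1 : ℝ) ^ k * (k.factorial : ℝ) * bellB n k (fun i => 1 / ((i : ℝ) + 1)))) ∧
      (∑ k ∈ Finset.Icc 1 n,
          (-1 : ℝ) ^ k * (k.factorial : ℝ) * bellB n k (fun i => 1 / ((i : ℝ) + 1))) =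
        (bernoulli n : ℝ) := by
  have hpart2 := part2 n hn
  refine ⟨?_, hpart2⟩
  rw [Ffun_eq, hpart2]
  have hcont : Continuous (iteratedDeriv n (fun x => (hfun x)⁻¹)) :=
    Ffun_contDiff.continuous_iteratedDeriv n (by norm_cast; exact le_top)
  rw [← iteratedDeriv_F_eq_bernoulli n]
  exact (hcont.tendsto 0).mono_left nhdsWithin_le_nhds
end
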